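/- arXiv:0706.0879 — 9 statements merged into one kernel-verified Lean document; each statement's English description precedes it below -/
import Mathlib

section
/- Let λ > 0 and let Y be a random variable taking values in the non-negative integers. Then E[λ g(Y+1) − Y g(Y)] = 0 for every finitely supported function g : ℤ≥0 → ℝ if and only if Y has the Poisson distribution Po(λ), i.e. P(Y = j) = e^{−λ} λ^j / j! for all j ∈ ℤ≥0. -/
open MeasureTheory

lemma integral_nat_comp {Ω : Type*} [MeasurableSpace Ω] (P : Measure Ω) [IsFiniteMeasure P]
    (Y : Ω → ℕ) (hY : Measurable Y) (f : ℕ → ℝ) (s : Finset ℕ)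
    (hs : ∀ n ∉ s, f n = 0) :
    ∫ ω, f (Y ω) ∂P = ∑ n ∈ s, f n * (P {ω | Y ω = n}).toReal := by
  have hmeas : ∀ n : ℕ, MeasurableSet {ω | Y ω = n} := fun n =>
    hY (measurableSet_singleton n)
  have h1 : ∀ ω, f (Y ω) = ∑ n ∈ s, Set.indicator {ω' | Y ω' = n} (fun _ => f n) ω := by
    intro ω
    have : ∀ n ∈ s, Set.indicator {ω' | Y ω' = n} (fun _ => f n) ω
        = if Y ω = n then f n else 0 := by
      intro n _
      by_cases h : Y ω = n <;> simp [Set.indicator, h]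
    rw [Finset.sum_congr rfl this, Finset.sum_ite_eq s (Y ω) f]
    by_cases h : Y ω ∈ s
    · simp [h]
    · simp [h, hs _ h]
  calc ∫ ω, f (Y ω) ∂P
      = ∫ ω, ∑ n ∈ s, Set.indicator {ω' | Y ω' = n} (fun _ => f n) ω ∂P := by
        exact integral_congr_ae (Filter.Eventually.of_forall h1)
    _ = ∑ n ∈ s, ∫ ω, Set.indicator {ω' | Y ω' = n} (fun _ => f n) ω ∂P := by
        apply integral_finset_sum
        intro n _
        exact (integrable_const (f n)).indicator (hmeas n)
    _ = ∑ n ∈ s, f n * (P {ω | Y ω = n}).toReal := by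
        refine Finset.sum_congr rfl fun n _ => ?_
        rw [integral_indicator_const (f n) (hmeas n), smul_eq_mul, mul_comm]; rfl

/-- For `λ > 0` and a `ℕ`-valued random variable `Y`, we have
`E[λ g(Y+1) − Y g(Y)] = 0` for every finitely supported `g : ℕ → ℝ` if and only if
`Y ∼ Po(λ)`, i.e. `P(Y = j) = e^{−λ} λ^j / j!` for all `j`. -/
theorem poisson_stein_characterization
    {Ω : Type*} [MeasurableSpace Ω] (P : Measure Ω) [IsProbabilityMeasure P]
    (lam : ℝ) (hlam : 0 < lam) (Y : Ω → ℕ) (hY : Measurable Y) :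
    (∀ g : ℕ → ℝ, (Function.support g).Finite →
        ∫ ω, (lam * g (Y ω + 1) - (Y ω : ℝ) * g (Y ω)) ∂P = 0) ↔
      ∀ j : ℕ, (P {ω | Y ω = j}).toReal =
        Real.exp (-lam) * lam ^ j / (Nat.factorial j : ℝ) := by
  set p : ℕ → ℝ := fun j => (P {ω | Y ω = j}).toReal with hp
  constructor
  · intro hstein
    -- recursion: (j+1) p (j+1) = lam * p j
    have hrec : ∀ j : ℕ, ((j : ℝ) + 1) * p (j + 1) = lam * p j := by
      intro j
      set g : ℕ → ℝ := fun n => if n = j + 1 then 1 else 0 with hg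
      have hgsupp : (Function.support g).Finite := by
        apply Set.Finite.subset (Set.finite_singleton (j+1))
        intro n hn
        simp only [Function.mem_support, hg] at hn
        by_contra h
        simp only [Set.mem_singleton_iff] at h
        exact hn (if_neg h)
      have h0 := hstein g hgsupp
      set f : ℕ → ℝ := fun n => lam * g (n + 1) - (n : ℝ) * g n with hf
      have key : ∫ ω, f (Y ω) ∂P = 0 := h0
      rw [integral_nat_comp P Y hY f {j, j+1} ?side] at key
      · have hjj : j ≠ j + 1 := by omega
        rw [Finset.sum_insert (by simp [hjj]), Finset.sum_singleton] at key
        have e1 : f j = lam := by simp [hf, hg, hjj]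
        have e2 : f (j+1) = -((j:ℝ)+1) := by
          simp [hf, hg]
        rw [e1, e2] at key
        push_cast
        linarith
      · intro n hn
        simp only [Finset.mem_insert, Finset.mem_singleton] at hn
        push_neg at hn
        simp [hf, hg, hn.1, hn.2, fun h : n + 1 = j + 1 => hn.1 (by omega)]
    -- closed form in terms of p 0
    have hform : ∀ j : ℕ, p j = p 0 * (lam ^ j / (Nat.factorial j : ℝ)) := by
      intro j
      induction j with
      | zero => simp
      | succ n ih =>
        have h := hrec n
        have hn1 : ((n : ℝ) + 1) ≠ 0 := by positivity
        have : p (n+1) = lam * p n / ((n:ℝ)+1) := by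
          field_simp at h ⊢; linarith
        rw [this, ih, Nat.factorial_succ]
        push_cast
        have hfac : (Nat.factorial n : ℝ) ≠ 0 := by
          exact_mod_cast Nat.factorial_ne_zero n
        field_simp
        ring
    -- total mass 1
    have hsum : ∑' j : ℕ, p j = 1 := by
      have hmeas : ∀ n : ℕ, MeasurableSet {ω | Y ω = n} := fun n =>
        hY (measurableSet_singleton n)
      have hdisj : Pairwise (Function.onFun Disjoint fun j : ℕ => {ω | Y ω = j}) := by
        intro i j hij
        simp only [Function.onFun, Set.disjoint_left]
        intro ω hi hj
        exact hij (hi.symm.trans hj)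
      have hcover : (⋃ j : ℕ, {ω | Y ω = j}) = Set.univ := by
        ext ω; simp
      have h1 : (∑' j : ℕ, P {ω | Y ω = j}) = 1 := by
        rw [← measure_iUnion hdisj hmeas, hcover, measure_univ]
      have h2 : (∑' j : ℕ, P {ω | Y ω = j}).toReal
          = ∑' j : ℕ, p j := by
        exact ENNReal.tsum_toReal_eq fun j => measure_ne_top P _
      rw [← h2, h1, ENNReal.toReal_one]
    -- evaluate sum
    have hexp : ∑' j : ℕ, lam ^ j / (Nat.factorial j : ℝ) = Real.exp lam := by
      rw [Real.exp_eq_exp_ℝ, NormedSpace.exp_eq_tsum_div]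
    have hsum2 : p 0 * Real.exp lam = 1 := by
      rw [← hexp, ← tsum_mul_left]
      rw [← hsum]
      exact tsum_congr fun j => (hform j).symm
    have hp0 : p 0 = Real.exp (-lam) := by
      rw [Real.exp_neg]
      field_simp at hsum2 ⊢
      linarith [hsum2]
    intro j
    rw [show (P {ω | Y ω = j}).toReal = p j from rfl, hform j, hp0]
    ring
  · intro hpois g hgsupp
    have hformp : ∀ j, p j = Real.exp (-lam) * lam ^ j / (Nat.factorial j : ℝ) := hpois
    have key : ∀ n : ℕ, ((n : ℝ) + 1) * p (n + 1) = lam * p n := by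
      intro n
      rw [hformp, hformp, Nat.factorial_succ]
      have hfac : (Nat.factorial n : ℝ) ≠ 0 := by exact_mod_cast Nat.factorial_ne_zero n
      have hn1 : ((n : ℝ) + 1) ≠ 0 := by positivity
      push_cast
      field_simp
      ring
    -- choose bound on support
    obtain ⟨N, hN⟩ : ∃ N : ℕ, ∀ n ≥ N, g n = 0 := by
      refine ⟨hgsupp.toFinset.sup id + 1, fun n hn => ?_⟩
      by_contra h
      have : n ∈ hgsupp.toFinset := by simpa using h
      have h2 := Finset.le_sup (f := id) this
      simp only [id_eq] at h2
      omega
    set f : ℕ → ℝ := fun n => lam * g (n + 1) - (n : ℝ) * g n with hf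
    have hint : ∫ ω, f (Y ω) ∂P = ∑ n ∈ Finset.range (N + 1), f n * p n := by
      apply integral_nat_comp P Y hY f (Finset.range (N+1))
      intro n hn
      simp only [Finset.mem_range, not_lt] at hn
      simp [hf, hN n (by omega), hN (n+1) (by omega)]
    have htel : ∀ M : ℕ, ∑ n ∈ Finset.range (M + 1), f n * p n = lam * g (M + 1) * p M := by
      intro M
      induction M with
      | zero => simp [hf]
      | succ m ih =>
        rw [Finset.sum_range_succ, ih]
        have hfe : f (m + 1) = lam * g (m + 1 + 1) - ((m : ℝ) + 1) * g (m + 1) := by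
          simp only [hf]; push_cast; ring
        rw [hfe]
        linear_combination (-(g (m + 1))) * key m
    show ∫ ω, f (Y ω) ∂P = 0
    rw [hint, htel N, hN (N+1) (by omega)]
    ring
end

section
/- Let λ > 0 and A ⊆ ℤ≥0. Define g_A : ℤ≥0 → ℝ by g_A(0) = 0 and g_A(j+1) = (j! / λ^{j+1}) Σ_{i=0}^{j} (1_A(i) − Po(λ)(A)) λ^i / i! for j ≥ 0. Then g_A solves the Stein equation: for every j ∈ ℤ≥0, λ g_A(j+1) − j g_A(j) = 1_A(j) − Po(λ)(A). Moreover g_A is bounded. -/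
open MeasureTheory

/-- `Po(λ)(A) = Σ_{j ∈ A} e^{−λ} λ^j / j!`. -/
noncomputable def poissonProb (lam : ℝ) (A : Set ℕ) : ℝ :=
  ∑' j : ℕ, Set.indicator A (fun j => Real.exp (-lam) * lam ^ j / (Nat.factorial j : ℝ)) j

/-- The canonical solution of the Poisson Stein equation for the test function `1_A`:
`g_A(0) = 0` and `g_A(j+1) = (j!/λ^{j+1}) Σ_{i=0}^{j} (1_A(i) − Po(λ)(A)) λ^i / i!`. -/
noncomputable def steinSol (lam : ℝ) (A : Set ℕ) : ℕ → ℝ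
  | 0 => 0
  | (j + 1) => (Nat.factorial j : ℝ) / lam ^ (j + 1) *
      ∑ i ∈ Finset.range (j + 1),
        (Set.indicator A (fun _ => (1 : ℝ)) i - poissonProb lam A) * lam ^ i /
          (Nat.factorial i : ℝ)

lemma tsum_pow_div_factorial (lam : ℝ) :
    ∑' i : ℕ, lam ^ i / (Nat.factorial i : ℝ) = Real.exp lam := by
  rw [Real.exp_eq_exp_ℝ, NormedSpace.exp_eq_tsum_div]

lemma indicator_abs_le (A : Set ℕ) (i : ℕ) :
    |Set.indicator A (fun _ => (1 : ℝ)) i| ≤ 1 := by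
  by_cases h : i ∈ A <;> simp [Set.indicator, h]

lemma indicator_nonneg' (A : Set ℕ) (i : ℕ) :
    0 ≤ Set.indicator A (fun _ => (1 : ℝ)) i := by
  by_cases h : i ∈ A <;> simp [Set.indicator, h]

lemma indicator_le_one (A : Set ℕ) (i : ℕ) :
    Set.indicator A (fun _ => (1 : ℝ)) i ≤ 1 := by
  by_cases h : i ∈ A <;> simp [Set.indicator, h]

/-- For `λ > 0` and `A ⊆ ℤ≥0`, the function `g_A` solves the Stein equation
`λ g_A(j+1) − j g_A(j) = 1_A(j) − Po(λ)(A)` for every `j`, and `g_A` is bounded. -/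
theorem steinSol_solves_and_bounded (lam : ℝ) (hlam : 0 < lam) (A : Set ℕ) :
    (∀ j : ℕ, lam * steinSol lam A (j + 1) - (j : ℝ) * steinSol lam A j =
        Set.indicator A (fun _ => (1 : ℝ)) j - poissonProb lam A) ∧
      ∃ C : ℝ, ∀ j : ℕ, |steinSol lam A j| ≤ C := by
  set p : ℝ := poissonProb lam A with hp
  set f : ℕ → ℝ := Set.indicator A (fun _ => (1 : ℝ)) with hf
  have hlam0 : lam ≠ 0 := ne_of_gt hlam
  constructor
  · intro j
    cases j with
    | zero =>
      show lam * ((Nat.factorial 0 : ℝ) / lam ^ 1 * _) - _ = _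
      simp [steinSol]
      field_simp
      rfl
    | succ j =>
      have hfac : ((Nat.factorial j : ℝ)) ≠ 0 := by positivity
      have hfac' : ((Nat.factorial (j+1) : ℝ)) ≠ 0 := by positivity
      have hpow : lam ^ (j + 1) ≠ 0 := pow_ne_zero _ hlam0
      have hpow2 : lam ^ (j + 2) ≠ 0 := pow_ne_zero _ hlam0
      show lam * ((Nat.factorial (j+1) : ℝ) / lam ^ (j + 2) *
          ∑ i ∈ Finset.range (j + 2), (f i - p) * lam ^ i / (Nat.factorial i : ℝ))
        - ((j+1 : ℕ) : ℝ) * ((Nat.factorial j : ℝ) / lam ^ (j + 1) *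
          ∑ i ∈ Finset.range (j + 1), (f i - p) * lam ^ i / (Nat.factorial i : ℝ))
        = f (j+1) - p
      rw [Finset.sum_range_succ]
      have hfs : ((Nat.factorial (j+1) : ℝ)) = ((j:ℝ)+1) * (Nat.factorial j : ℝ) := by
        push_cast [Nat.factorial_succ]; ring
      rw [hfs]
      push_cast
      field_simp
      ring
  · -- boundedness
    have hsum : Summable (fun i : ℕ => lam ^ i / (Nat.factorial i : ℝ)) :=
      Real.summable_pow_div_factorial lam
    have hsumf : Summable (fun i : ℕ => f i * lam ^ i / (Nat.factorial i : ℝ)) := by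
      apply Summable.of_abs
      apply hsum.of_nonneg_of_le (fun i => abs_nonneg _)
      intro i
      rw [abs_div, abs_mul]
      have h1 : |lam ^ i| = lam ^ i := abs_of_pos (pow_pos hlam i)
      have h2 : |(Nat.factorial i : ℝ)| = (Nat.factorial i : ℝ) :=
        abs_of_nonneg (by positivity)
      rw [h1, h2]
      have := indicator_abs_le A i
      have hpos : (0:ℝ) < lam ^ i / (Nat.factorial i : ℝ) := by positivity
      calc |f i| * lam ^ i / (Nat.factorial i : ℝ)
          ≤ 1 * lam ^ i / (Nat.factorial i : ℝ) := by
            apply div_le_div_of_nonneg_right _ (by positivity)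
            · exact mul_le_mul_of_nonneg_right this (le_of_lt (pow_pos hlam i))
        _ = lam ^ i / (Nat.factorial i : ℝ) := by ring
    -- p = exp(-lam) * T
    have hTdef : p = Real.exp (-lam) * ∑' i : ℕ, f i * lam ^ i / (Nat.factorial i : ℝ) := by
      rw [hp, poissonProb, ← tsum_mul_left]
      congr 1
      ext i
      by_cases h : i ∈ A <;> simp [hf, Set.indicator, h] <;> ring
    set T : ℝ := ∑' i : ℕ, f i * lam ^ i / (Nat.factorial i : ℝ) with hT
    have hT_le : T ≤ Real.exp lam := by
      rw [← tsum_pow_div_factorial lam]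
      apply Summable.tsum_le_tsum _ hsumf hsum
      intro i
      have := indicator_le_one A i
      have hpos : (0:ℝ) ≤ lam ^ i / (Nat.factorial i : ℝ) := by positivity
      calc f i * lam ^ i / (Nat.factorial i : ℝ)
          ≤ 1 * lam ^ i / (Nat.factorial i : ℝ) := by
            apply div_le_div_of_nonneg_right _ (by positivity)
            exact mul_le_mul_of_nonneg_right this (le_of_lt (pow_pos hlam i))
        _ = lam ^ i / (Nat.factorial i : ℝ) := by ring
    have hT_nonneg : 0 ≤ T := by
      apply tsum_nonneg
      intro i
      have := indicator_nonneg' A i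
      positivity
    have hp_nonneg : 0 ≤ p := by
      rw [hTdef]; positivity
    have hp_le : p ≤ 1 := by
      rw [hTdef]
      calc Real.exp (-lam) * T ≤ Real.exp (-lam) * Real.exp lam :=
            mul_le_mul_of_nonneg_left hT_le (le_of_lt (Real.exp_pos _))
        _ = 1 := by rw [← Real.exp_add]; simp
    -- the summand
    set h : ℕ → ℝ := fun i => (f i - p) * lam ^ i / (Nat.factorial i : ℝ) with hh
    have habs : ∀ i, |h i| ≤ lam ^ i / (Nat.factorial i : ℝ) := by
      intro i
      rw [hh]
      simp only
      rw [abs_div, abs_mul, abs_of_pos (pow_pos hlam i),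
        abs_of_pos (show (0:ℝ) < (Nat.factorial i : ℝ) by positivity)]
      have h1 : |f i - p| ≤ 1 := by
        rw [abs_le]
        constructor
        · have := indicator_nonneg' A i; linarith
        · have := indicator_le_one A i; linarith
      calc |f i - p| * lam ^ i / (Nat.factorial i : ℝ)
          ≤ 1 * lam ^ i / (Nat.factorial i : ℝ) := by
            apply div_le_div_of_nonneg_right _ (by positivity)
            exact mul_le_mul_of_nonneg_right h1 (le_of_lt (pow_pos hlam i))
        _ = lam ^ i / (Nat.factorial i : ℝ) := by ring
    have hsumh : Summable h :=
      Summable.of_abs (hsum.of_nonneg_of_le (fun i => abs_nonneg _) habs)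
    have htsum0 : ∑' i, h i = 0 := by
      have : h = fun i => f i * lam ^ i / (Nat.factorial i : ℝ)
          - p * (lam ^ i / (Nat.factorial i : ℝ)) := by
        ext i; rw [hh]; ring
      rw [this, Summable.tsum_sub hsumf (hsum.mul_left p), tsum_mul_left,
        tsum_pow_div_factorial, hTdef]
      rw [Real.exp_neg]
      field_simp
      exact sub_eq_zero.mpr rfl
    refine ⟨Real.exp lam, fun j => ?_⟩
    cases j with
    | zero => simp [steinSol]; positivity
    | succ j =>
      show |(Nat.factorial j : ℝ) / lam ^ (j + 1) * ∑ i ∈ Finset.range (j + 1), h i|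
          ≤ Real.exp lam
      have hkey : ∑ i ∈ Finset.range (j + 1), h i = - ∑' k, h (k + (j + 1)) := by
        have := Summable.sum_add_tsum_nat_add (f := h) (j + 1) hsumh
        rw [htsum0] at this
        linarith
      rw [hkey, abs_mul, abs_neg]
      have hsumtail : Summable (fun k => h (k + (j + 1))) :=
        hsumh.comp_injective (add_left_injective (j+1))
      have habs_tail : |∑' k, h (k + (j + 1))| ≤ ∑' k, |h (k + (j + 1))| := by
        have := norm_tsum_le_tsum_norm (f := fun k => h (k + (j + 1)))
          (by simpa [Real.norm_eq_abs] using hsumtail.abs)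
        simpa [Real.norm_eq_abs] using this
      have hsumtail2 : Summable (fun k : ℕ => lam ^ (k + (j+1)) / (Nat.factorial (k + (j+1)) : ℝ)) :=
        hsum.comp_injective (add_left_injective (j+1))
      have hsum4 : Summable (fun k : ℕ => lam ^ k / (Nat.factorial (k+1) : ℝ)) := by
        apply hsum.of_nonneg_of_le (fun k => by positivity)
        intro k
        apply div_le_div_of_nonneg_left (by positivity) (by positivity)
        exact_mod_cast Nat.factorial_le (Nat.le_succ k)
      have hFpos : (0:ℝ) < (Nat.factorial j : ℝ) / lam ^ (j + 1) := by positivity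
      have habs_F : |(Nat.factorial j : ℝ) / lam ^ (j + 1)| = (Nat.factorial j : ℝ) / lam ^ (j + 1) :=
        abs_of_pos hFpos
      rw [habs_F]
      have hterm : ∀ k : ℕ, (Nat.factorial j : ℝ) / lam ^ (j + 1) *
          (lam ^ (k + (j+1)) / (Nat.factorial (k + (j+1)) : ℝ)) ≤
          lam ^ k / (Nat.factorial (k+1) : ℝ) := by
        intro k
        have hd : Nat.factorial j * Nat.factorial (k+1) ≤ Nat.factorial (k + (j+1)) := by
          apply Nat.le_of_dvd (Nat.factorial_pos _)
          have := Nat.factorial_mul_factorial_dvd_factorial_add j (k+1)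
          rwa [show j + (k+1) = k + (j+1) by omega] at this
        have hdR : (Nat.factorial j : ℝ) * (Nat.factorial (k+1) : ℝ) ≤
            (Nat.factorial (k + (j+1)) : ℝ) := by exact_mod_cast hd
        have e1 : (Nat.factorial j : ℝ) / lam ^ (j + 1) *
            (lam ^ (k + (j+1)) / (Nat.factorial (k + (j+1)) : ℝ)) =
            (Nat.factorial j : ℝ) * lam ^ k / (Nat.factorial (k + (j+1)) : ℝ) := by
          rw [pow_add]
          field_simp
          ring
        rw [e1, div_le_div_iff₀ (by positivity) (by positivity)]
        have hlk : (0:ℝ) ≤ lam ^ k := le_of_lt (pow_pos hlam k)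
        nlinarith
      calc (Nat.factorial j : ℝ) / lam ^ (j + 1) * |∑' k, h (k + (j + 1))|
          ≤ (Nat.factorial j : ℝ) / lam ^ (j + 1) * ∑' k, |h (k + (j + 1))| :=
            mul_le_mul_of_nonneg_left habs_tail hFpos.le
        _ ≤ (Nat.factorial j : ℝ) / lam ^ (j + 1) *
              ∑' k, lam ^ (k + (j+1)) / (Nat.factorial (k + (j+1)) : ℝ) := by
            apply mul_le_mul_of_nonneg_left _ hFpos.le
            exact Summable.tsum_le_tsum (fun k => habs _) hsumtail.abs hsumtail2
        _ = ∑' k, (Nat.factorial j : ℝ) / lam ^ (j + 1) *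
              (lam ^ (k + (j+1)) / (Nat.factorial (k + (j+1)) : ℝ)) := tsum_mul_left.symm
        _ ≤ ∑' k : ℕ, lam ^ k / (Nat.factorial (k+1) : ℝ) :=
            Summable.tsum_le_tsum hterm (hsumtail2.mul_left _) hsum4
        _ ≤ ∑' k : ℕ, lam ^ k / (Nat.factorial k : ℝ) := by
            apply Summable.tsum_le_tsum _ hsum4 hsum
            intro k
            apply div_le_div_of_nonneg_left (by positivity) (by positivity)
            exact_mod_cast Nat.factorial_le (Nat.le_succ k)
        _ = Real.exp lam := tsum_pow_div_factorial lam
end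

section
/- Let λ > 0 and let W be a ℤ≥0-valued random variable with E[W] < ∞. Let τ : ℤ≥0 → ℝ be a function with E|τ(W)| < ∞ such that E[(W − λ) g(W)] = E[τ(W) (g(W+1) − g(W))] for every bounded function g : ℤ≥0 → ℝ. Then d_TV(L(W), Po(λ)) ≤ ((1 − e^{−λ}) / λ) · E|τ(W) − λ|. -/
open MeasureTheory

namespace SteinAux


noncomputable def pj (lam : ℝ) (i : ℕ) : ℝ := Real.exp (-lam) * lam ^ i / (Nat.factorial i : ℝ)

variable {lam : ℝ}

lemma pj_nonneg (hlam : 0 < lam) (i : ℕ) : 0 ≤ pj lam i := by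
  unfold pj; positivity

lemma hasSum_pj (hlam : 0 < lam) : HasSum (pj lam) 1 := by
  unfold pj
  apply (hasSum_mul_left_iff (Real.exp_ne_zero lam)).mp
  simp only [mul_one]
  have : (fun i ↦ Real.exp lam * (Real.exp (-lam) * lam ^ i / (Nat.factorial i : ℝ))) =
      fun i ↦ lam ^ i / (Nat.factorial i : ℝ) := by
    ext n
    rw [mul_div_assoc, Real.exp_neg, ← mul_assoc, ← div_eq_mul_inv,
      div_self (Real.exp_ne_zero lam), one_mul]
  rw [this, Real.exp_eq_exp_ℝ]
  exact NormedSpace.expSeries_div_hasSum_exp lam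

lemma pj_rec (hlam : 0 < lam) (i : ℕ) : lam * pj lam i = (i + 1 : ℝ) * pj lam (i+1) := by
  unfold pj
  have h1 : ((Nat.factorial (i+1) : ℝ)) = (i+1 : ℝ) * (Nat.factorial i : ℝ) := by
    rw [Nat.factorial_succ]; push_cast; ring
  have h2 : (Nat.factorial i : ℝ) ≠ 0 := Nat.cast_ne_zero.mpr (Nat.factorial_ne_zero i)
  have h3 : ((i:ℝ)+1) ≠ 0 := by positivity
  rw [h1]
  field_simp
  ring

noncomputable def ind (lam : ℝ) (A : Set ℕ) : ℕ → ℝ := A.indicator (pj lam)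

lemma ind_nonneg (hlam : 0 < lam) (A : Set ℕ) (i : ℕ) : 0 ≤ ind lam A i :=
  Set.indicator_nonneg (fun j _ => pj_nonneg hlam j) i

lemma ind_le_pj (hlam : 0 < lam) (A : Set ℕ) (i : ℕ) : ind lam A i ≤ pj lam i :=
  Set.indicator_le_self' (fun j _ => pj_nonneg hlam j) i

lemma summable_ind (hlam : 0 < lam) (A : Set ℕ) : Summable (ind lam A) :=
  Summable.of_nonneg_of_le (ind_nonneg hlam A) (ind_le_pj hlam A) (hasSum_pj hlam).summable

lemma hasSum_ind (hlam : 0 < lam) (A : Set ℕ) : HasSum (ind lam A) (poissonProb lam A) :=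
  (summable_ind hlam A).hasSum

lemma po_nonneg (hlam : 0 < lam) (A : Set ℕ) : 0 ≤ poissonProb lam A :=
  tsum_nonneg (ind_nonneg hlam A)

lemma po_union (hlam : 0 < lam) {A B : Set ℕ} (h : Disjoint A B) :
    poissonProb lam (A ∪ B) = poissonProb lam A + poissonProb lam B := by
  have : ind lam (A ∪ B) = fun i => ind lam A i + ind lam B i := by
    funext i
    simp [ind, Set.indicator_union_of_disjoint h]
  exact HasSum.unique (hasSum_ind hlam _) (by rw [this] at *; exact (hasSum_ind hlam A).add (hasSum_ind hlam B))

lemma po_compl (hlam : 0 < lam) (A : Set ℕ) :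
    poissonProb lam A + poissonProb lam Aᶜ = 1 := by
  have : (fun i => ind lam A i + ind lam Aᶜ i) = pj lam := by
    funext i
    simp [ind, Set.indicator_self_add_compl_apply]
  exact HasSum.unique (by rw [← this] at *; exact (hasSum_ind hlam A).add (hasSum_ind hlam Aᶜ)) (hasSum_pj hlam)

lemma po_empty : poissonProb lam ∅ = 0 := by simp [poissonProb]

lemma po_singleton (hlam : 0 < lam) (k : ℕ) : poissonProb lam {k} = pj lam k := by
  have heq : ind lam {k} = fun i => if i = k then pj lam k else 0 := by
    funext i
    by_cases h : i = k <;> simp [ind, Set.indicator_apply, h]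
  have h2 : HasSum (ind lam {k}) (pj lam k) := by
    rw [heq]; exact hasSum_ite_eq k _
  exact (hasSum_ind hlam {k}).unique h2



noncomputable def Fr (lam : ℝ) (n : ℕ) : ℝ := ∑ i ∈ Finset.range n, pj lam i
noncomputable def Sr (lam : ℝ) (A : Set ℕ) (n : ℕ) : ℝ := ∑ i ∈ Finset.range n, ind lam A i

lemma hasSum_tail {f : ℕ → ℝ} {T : ℝ} (h : HasSum f T) (n : ℕ) :
    HasSum (fun m => f (m + n)) (T - ∑ i ∈ Finset.range n, f i) := by
  rw [hasSum_nat_add_iff n, sub_add_cancel]; exact h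

lemma Fr_le_one (hlam : 0 < lam) (n : ℕ) : Fr lam n ≤ 1 :=
  sum_le_hasSum _ (fun i _ => pj_nonneg hlam i) (hasSum_pj hlam)

lemma Fr_nonneg (hlam : 0 < lam) (n : ℕ) : 0 ≤ Fr lam n :=
  Finset.sum_nonneg fun i _ => pj_nonneg hlam i

lemma Sr_nonneg (hlam : 0 < lam) (A : Set ℕ) (n : ℕ) : 0 ≤ Sr lam A n :=
  Finset.sum_nonneg fun i _ => ind_nonneg hlam A i

lemma Sr_le_Fr (hlam : 0 < lam) (A : Set ℕ) (n : ℕ) : Sr lam A n ≤ Fr lam n :=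
  Finset.sum_le_sum fun i _ => ind_le_pj hlam A i

lemma Sr_le_po (hlam : 0 < lam) (A : Set ℕ) (n : ℕ) : Sr lam A n ≤ poissonProb lam A :=
  sum_le_hasSum _ (fun i _ => ind_nonneg hlam A i) (hasSum_ind hlam A)

lemma po_sub_Sr_le (hlam : 0 < lam) (A : Set ℕ) (n : ℕ) :
    poissonProb lam A - Sr lam A n ≤ 1 - Fr lam n :=
  hasSum_le (fun m => ind_le_pj hlam A (m + n))
    (hasSum_tail (hasSum_ind hlam A) n) (hasSum_tail (hasSum_pj hlam) n)

lemma tail_le (hlam : 0 < lam) (j : ℕ) :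
    1 - Fr lam (j+1) ≤ lam ^ (j+1) / (Nat.factorial j : ℝ) := by
  have hmaj : HasSum (fun m => Real.exp (-lam) * lam ^ (j+1) / (Nat.factorial j : ℝ) *
      (lam ^ m / (Nat.factorial m : ℝ))) (lam ^ (j+1) / (Nat.factorial j : ℝ)) := by
    have hexp : HasSum (fun m => lam ^ m / (Nat.factorial m : ℝ)) (Real.exp lam) := by
      rw [Real.exp_eq_exp_ℝ]; exact NormedSpace.expSeries_div_hasSum_exp lam
    have := hexp.mul_left (Real.exp (-lam) * lam ^ (j+1) / (Nat.factorial j : ℝ))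
    convert this using 1
    · rfl
    rw [Real.exp_neg]
    field_simp
  refine hasSum_le (fun m => ?_) (hasSum_tail (hasSum_pj hlam) (j+1)) hmaj
  unfold pj
  have hfac : (Nat.factorial j : ℝ) * (Nat.factorial m : ℝ) ≤ (Nat.factorial (m + (j+1)) : ℝ) := by
    have h1 : Nat.factorial j * Nat.factorial m ≤ Nat.factorial (j + m) :=
      Nat.le_of_dvd (Nat.factorial_pos _) (Nat.factorial_mul_factorial_dvd_factorial_add j m)
    have h2 : Nat.factorial (j + m) ≤ Nat.factorial (m + (j+1)) := by
      apply Nat.factorial_le; omega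
    exact_mod_cast le_trans h1 h2
  rw [div_mul_div_comm, div_le_div_iff₀ (by positivity) (by positivity)]
  calc Real.exp (-lam) * lam ^ (m + (j+1)) * ((Nat.factorial j : ℝ) * (Nat.factorial m : ℝ))
      ≤ Real.exp (-lam) * lam ^ (m + (j+1)) * (Nat.factorial (m + (j+1)) : ℝ) := by
        apply mul_le_mul_of_nonneg_left hfac (by positivity)
    _ = Real.exp (-lam) * lam ^ (j+1) * lam ^ m * (Nat.factorial (m + (j+1)) : ℝ) := by
        rw [pow_add]; ring

lemma tail_mono (hlam : 0 < lam) (j : ℕ) :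
    (j : ℝ) * (1 - Fr lam (j+1)) ≤ lam * (1 - Fr lam j) := by
  have h1 : HasSum (fun m => (j:ℝ) * pj lam (m + (j+1))) ((j:ℝ) * (1 - Fr lam (j+1))) :=
    (hasSum_tail (hasSum_pj hlam) (j+1)).mul_left _
  have h2 : HasSum (fun m => lam * pj lam (m + j)) (lam * (1 - Fr lam j)) :=
    (hasSum_tail (hasSum_pj hlam) j).mul_left _
  refine hasSum_le (fun m => ?_) h1 h2
  rw [pj_rec hlam (m + j)]
  have : (m + (j+1)) = (m + j) + 1 := by omega
  rw [this]
  apply mul_le_mul_of_nonneg_right _ (pj_nonneg hlam _)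
  push_cast; linarith [Nat.cast_nonneg (α := ℝ) m]

lemma key_sum (hlam : 0 < lam) (k : ℕ) :
    lam * Fr lam k ≤ (k : ℝ) * ∑ i ∈ Finset.range k, pj lam (i+1) := by
  unfold Fr
  rw [Finset.mul_sum, Finset.mul_sum]
  refine Finset.sum_le_sum fun i hi => ?_
  rw [pj_rec hlam i]
  apply mul_le_mul_of_nonneg_right _ (pj_nonneg hlam _)
  have := Finset.mem_range.mp hi
  have h2 : (i:ℝ) + 1 ≤ (k:ℝ) := by exact_mod_cast this
  linarith

lemma Fr_mono_mul (hlam : 0 < lam) (j : ℕ) :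
    lam * Fr lam j ≤ (j : ℝ) * Fr lam (j+1) := by
  refine le_trans (key_sum hlam j) ?_
  apply mul_le_mul_of_nonneg_left _ (Nat.cast_nonneg j)
  have : Fr lam (j+1) = (∑ i ∈ Finset.range j, pj lam (i+1)) + pj lam 0 := by
    unfold Fr; rw [Finset.sum_range_succ']
  rw [this]
  linarith [pj_nonneg hlam 0]



/-- The Stein solution. -/
noncomputable def steinG (lam : ℝ) (A : Set ℕ) : ℕ → ℝ
  | 0 => 0
  | (j+1) => Real.exp lam * (Nat.factorial j : ℝ) / lam ^ (j+1) *
      (Sr lam A (j+1) - poissonProb lam A * Fr lam (j+1))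

lemma fact_ne (j : ℕ) : ((Nat.factorial j : ℝ)) ≠ 0 :=
  Nat.cast_ne_zero.mpr (Nat.factorial_ne_zero j)

lemma Sr_succ (A : Set ℕ) (n : ℕ) : Sr lam A (n+1) = Sr lam A n + ind lam A n :=
  Finset.sum_range_succ _ n

lemma Fr_succ (n : ℕ) : Fr lam (n+1) = Fr lam n + pj lam n :=
  Finset.sum_range_succ _ n

lemma ind_mem {A : Set ℕ} {i : ℕ} (h : i ∈ A) : ind lam A i = pj lam i :=
  Set.indicator_of_mem h _

lemma ind_not_mem {A : Set ℕ} {i : ℕ} (h : i ∉ A) : ind lam A i = 0 :=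
  Set.indicator_of_notMem h _

/-- The Stein equation. -/
lemma stein_eq (hlam : 0 < lam) (A : Set ℕ) (j : ℕ) :
    lam * steinG lam A (j+1) - (j : ℝ) * steinG lam A j
      = Set.indicator A (fun _ => (1:ℝ)) j - poissonProb lam A := by
  have hl := hlam.ne'
  have he := Real.exp_ne_zero lam
  have hexp : Real.exp lam * Real.exp (-lam) = 1 := by
    rw [← Real.exp_add]; simp
  cases j with
  | zero =>
    simp only [steinG, Nat.cast_zero, zero_mul, sub_zero]
    have h1 : Sr lam A 1 = ind lam A 0 := by simp [Sr, Fr, Finset.sum_range_one]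
    have h2 : Fr lam 1 = pj lam 0 := by simp [Fr, Finset.sum_range_one]
    have h0 : pj lam 0 = Real.exp (-lam) := by simp [pj]
    by_cases hA : 0 ∈ A
    · rw [h1, h2, ind_mem hA, h0, Set.indicator_of_mem hA, Real.exp_neg]
      field_simp
      ring
    · rw [h1, h2, ind_not_mem hA, h0, Set.indicator_of_notMem hA, Real.exp_neg]
      field_simp
      ring
  | succ m =>
    simp only [steinG]
    have hS : Sr lam A (m+2) = Sr lam A (m+1) + ind lam A (m+1) := Sr_succ A (m+1)
    have hF : Fr lam (m+2) = Fr lam (m+1) + pj lam (m+1) := Fr_succ (m+1)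
    have hfac : ((Nat.factorial (m+1) : ℝ)) = ((m:ℝ)+1) * (Nat.factorial m : ℝ) := by
      rw [Nat.factorial_succ]; push_cast; ring
    have hp : pj lam (m+1) = Real.exp (-lam) * lam ^ (m+1) / (Nat.factorial (m+1) : ℝ) := rfl
    have hpm : (0:ℝ) < (m:ℝ)+1 := by positivity
    by_cases hA : m+1 ∈ A
    · rw [hS, hF, ind_mem hA, Set.indicator_of_mem hA, hp, hfac, Real.exp_neg]
      field_simp
      push_cast
      ring
    · rw [hS, hF, ind_not_mem hA, Set.indicator_of_notMem hA, hp, hfac, Real.exp_neg]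
      field_simp
      push_cast
      ring
  
lemma steinG_union (hlam : 0 < lam) {A B : Set ℕ} (h : Disjoint A B) (n : ℕ) :
    steinG lam (A ∪ B) n = steinG lam A n + steinG lam B n := by
  cases n with
  | zero => simp [steinG]
  | succ j =>
    have hS : Sr lam (A ∪ B) (j+1) = Sr lam A (j+1) + Sr lam B (j+1) := by
      unfold Sr
      rw [← Finset.sum_add_distrib]
      refine Finset.sum_congr rfl fun i _ => ?_
      simp [ind, Set.indicator_union_of_disjoint h]
    simp only [steinG, hS, po_union hlam h]
    ring

lemma steinG_compl (hlam : 0 < lam) (A : Set ℕ) (n : ℕ) :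
    steinG lam Aᶜ n = - steinG lam A n := by
  cases n with
  | zero => simp [steinG]
  | succ j =>
    have hS : Sr lam A (j+1) + Sr lam Aᶜ (j+1) = Fr lam (j+1) := by
      unfold Sr Fr
      rw [← Finset.sum_add_distrib]
      refine Finset.sum_congr rfl fun i _ => ?_
      simp [ind, Set.indicator_self_add_compl_apply]
    have hP := po_compl hlam A
    simp only [steinG]
    have : Sr lam Aᶜ (j+1) = Fr lam (j+1) - Sr lam A (j+1) := by linarith
    rw [this]
    have : poissonProb lam Aᶜ = 1 - poissonProb lam A := by linarith
    rw [this]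
    ring

lemma steinG_empty (n : ℕ) : steinG lam ∅ n = 0 := by
  cases n with
  | zero => rfl
  | succ j =>
    have hS : Sr lam (∅ : Set ℕ) (j+1) = 0 := by
      unfold Sr; simp [ind]
    simp [steinG, hS, po_empty]

lemma delta_nonpos (hlam : 0 < lam) {B : Set ℕ} {j : ℕ} (h : j ∉ B) :
    steinG lam B (j+1) - steinG lam B j ≤ 0 := by
  have hl := hlam.ne'
  have hep : (0:ℝ) < Real.exp lam := Real.exp_pos lam
  cases j with
  | zero =>
    simp only [steinG, sub_zero]
    have h1 : Sr lam B 1 = 0 := by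
      simp [Sr, Finset.sum_range_one, ind_not_mem h]
    rw [h1]
    have := mul_nonneg (po_nonneg hlam B) (Fr_nonneg hlam 1)
    have hpos : (0:ℝ) < Real.exp lam * (Nat.factorial 0 : ℝ) / lam ^ 1 := by positivity
    nlinarith
  | succ m =>
    simp only [steinG]
    set S := Sr lam B (m+1) with hSdef
    have hS2 : Sr lam B (m+2) = S := by
      rw [Sr_succ, ind_not_mem h, add_zero]
    rw [hS2]
    set R := poissonProb lam B - S with hRdef
    have hR : poissonProb lam B = S + R := by rw [hRdef]; ring
    have hRnn : 0 ≤ R := by rw [hRdef]; linarith [Sr_le_po hlam B (m+1)]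
    have hSnn : 0 ≤ S := Sr_nonneg hlam B (m+1)
    set F1 := Fr lam (m+1) with hF1
    set F2 := Fr lam (m+2) with hF2
    -- two key inequalities, multiplied by S resp. R
    have k1 : ((m:ℝ)+1) * S * (1 - F2) ≤ lam * S * (1 - F1) := by
      have := tail_mono hlam (m+1)
      push_cast at this
      nlinarith
    have k2 : lam * R * F1 ≤ ((m:ℝ)+1) * R * F2 := by
      have := Fr_mono_mul hlam (m+1)
      push_cast at this
      nlinarith
    have hfac : ((Nat.factorial (m+1) : ℝ)) = ((m:ℝ)+1) * (Nat.factorial m : ℝ) := by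
      rw [Nat.factorial_succ]; push_cast; ring
    rw [hR, hfac]
    have hfm : (0:ℝ) < (Nat.factorial m : ℝ) := by
      exact_mod_cast Nat.factorial_pos m
    have hlp1 : (0:ℝ) < lam ^ (m+1) := by positivity
    have hlp2 : (0:ℝ) < lam ^ (m+2) := by positivity
    have hpow : lam ^ (m+2) = lam * lam ^ (m+1) := by ring
    -- goal: e*((m+1)*m!)/λ^{m+2}*(S - (S+R)*F2) - e*m!/λ^{m+1}*(S - (S+R)*F1) ≤ 0
    have key : ((m:ℝ)+1) * (S - (S+R)*F2) ≤ lam * (S - (S+R)*F1) := by nlinarith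
    have expand : Real.exp lam * (((m:ℝ)+1) * (Nat.factorial m : ℝ)) / lam ^ (m+2) *
          (S - (S+R)*F2) - Real.exp lam * (Nat.factorial m : ℝ) / lam ^ (m+1) * (S - (S+R)*F1)
        = Real.exp lam * (Nat.factorial m : ℝ) / lam ^ (m+2) *
          ((((m:ℝ)+1) * (S - (S+R)*F2)) - lam * (S - (S+R)*F1)) := by
      rw [hpow]; field_simp
    rw [expand]
    apply mul_nonpos_of_nonneg_of_nonpos (by positivity)
    linarith

lemma Sr_singleton (hlam : 0 < lam) (k n : ℕ) :
    Sr lam {k} n = if k < n then pj lam k else 0 := by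
  classical
  unfold Sr
  have : ∀ i, ind lam {k} i = if i = k then pj lam k else 0 := by
    intro i
    by_cases h : i = k
    · subst h; rw [ind_mem (Set.mem_singleton i)]; simp
    · rw [ind_not_mem (by simpa using h)]; simp [h]
  simp only [this]
  rw [Finset.sum_ite_eq' (Finset.range n) k]
  simp [Finset.mem_range]

lemma gsing_hi (hlam : 0 < lam) (k : ℕ) :
    steinG lam {k} (k+1) = (1 - Fr lam (k+1)) / lam := by
  have hl := hlam.ne'
  simp only [steinG, Sr_singleton hlam, po_singleton hlam, Nat.lt_succ_self, if_true]
  have hp : pj lam k = Real.exp (-lam) * lam ^ k / (Nat.factorial k : ℝ) := rfl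
  rw [hp, Real.exp_neg]
  have he := Real.exp_ne_zero lam
  have hf := fact_ne k
  field_simp
  ring

lemma gsing_lo (hlam : 0 < lam) (m : ℕ) :
    steinG lam {m+1} (m+1) = - Fr lam (m+1) / ((m:ℝ)+1) := by
  have hl := hlam.ne'
  simp only [steinG, Sr_singleton hlam, po_singleton hlam, lt_irrefl, if_false]
  have hp : pj lam (m+1) = Real.exp (-lam) * lam ^ (m+1) / (Nat.factorial (m+1) : ℝ) := rfl
  have hfac : ((Nat.factorial (m+1) : ℝ)) = ((m:ℝ)+1) * (Nat.factorial m : ℝ) := by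
    rw [Nat.factorial_succ]; push_cast; ring
  rw [hp, Real.exp_neg, hfac]
  have he := Real.exp_ne_zero lam
  have hf := fact_ne m
  have hpm : ((m:ℝ)+1) ≠ 0 := by positivity
  field_simp
  ring

lemma delta_diag (hlam : 0 < lam) (k : ℕ) :
    steinG lam {k} (k+1) - steinG lam {k} k ≤ (1 - Real.exp (-lam)) / lam := by
  have hl := hlam.ne'
  have hp0 : pj lam 0 = Real.exp (-lam) := by simp [pj]
  cases k with
  | zero =>
    rw [gsing_hi hlam 0]
    simp only [steinG, sub_zero]
    have h2 : Fr lam 1 = pj lam 0 := by simp [Fr, Finset.sum_range_one]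
    rw [h2, hp0]
  | succ m =>
    rw [gsing_hi hlam (m+1), gsing_lo hlam m]
    have hk : (0:ℝ) < (m:ℝ)+1 := by positivity
    -- key: lam * Fr (m+1) ≤ (m+1) * (Fr (m+2) - pj 0)
    have hkey := key_sum hlam (m+1)
    have hsum : (∑ i ∈ Finset.range (m+1), pj lam (i+1)) = Fr lam (m+2) - pj lam 0 := by
      have : Fr lam (m+2) = (∑ i ∈ Finset.range (m+1), pj lam (i+1)) + pj lam 0 :=
        Finset.sum_range_succ' _ (m+1)
      linarith
    rw [hsum] at hkey
    push_cast at hkey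
    have h2 : (1 - Fr lam (m+1+1)) / lam + Fr lam (m+1) / ((m:ℝ)+1)
        ≤ (1 - Real.exp (-lam)) / lam := by
      rw [div_add_div _ _ hl hk.ne', div_le_div_iff₀ (by positivity) hlam, ← hp0]
      have h3 : Fr lam (m+1+1) = Fr lam (m+2) := by norm_num
      rw [h3]
      nlinarith
    have h4 : (1 - Fr lam (m+1+1)) / lam - -Fr lam (m+1) / ((m:ℝ)+1)
        = (1 - Fr lam (m+1+1)) / lam + Fr lam (m+1) / ((m:ℝ)+1) := by ring
    rw [h4]
    exact h2

lemma delta_le (hlam : 0 < lam) (A : Set ℕ) (j : ℕ) :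
    steinG lam A (j+1) - steinG lam A j ≤ (1 - Real.exp (-lam)) / lam := by
  have hc : 0 ≤ (1 - Real.exp (-lam)) / lam := by
    have h5 : Real.exp (-lam) ≤ 1 := by
      rw [Real.exp_le_one_iff]; linarith
    apply div_nonneg (by linarith) hlam.le
  have hdecomp : A = (A \ {j}) ∪ (A ∩ {j}) := by
    ext x; by_cases h : x = j <;> simp [h] <;> tauto
  have hdisj : Disjoint (A \ {j}) (A ∩ {j}) := by
    apply Set.disjoint_left.mpr
    intro x hx hx2
    exact hx.2 hx2.2
  have h1 : steinG lam A (j+1) - steinG lam A j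
      = (steinG lam (A \ {j}) (j+1) - steinG lam (A \ {j}) j)
        + (steinG lam (A ∩ {j}) (j+1) - steinG lam (A ∩ {j}) j) := by
    conv_lhs => rw [hdecomp]
    rw [steinG_union hlam hdisj, steinG_union hlam hdisj]
    ring
  have h2 : steinG lam (A \ {j}) (j+1) - steinG lam (A \ {j}) j ≤ 0 :=
    delta_nonpos hlam (by simp)
  by_cases hA : j ∈ A
  · have : A ∩ {j} = {j} := by
      ext x; simp; rintro rfl; exact hA
    rw [h1, this]
    linarith [delta_diag hlam j]
  · have : A ∩ {j} = ∅ := by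
      ext x; simp; rintro h rfl; exact hA h
    rw [h1, this]
    simp only [steinG_empty, sub_zero]
    linarith

lemma delta_abs (hlam : 0 < lam) (A : Set ℕ) (j : ℕ) :
    |steinG lam A (j+1) - steinG lam A j| ≤ (1 - Real.exp (-lam)) / lam := by
  rw [abs_le]
  constructor
  · have := delta_le hlam Aᶜ j
    rw [steinG_compl hlam, steinG_compl hlam] at this
    linarith
  · exact delta_le hlam A j

lemma steinG_bounded (hlam : 0 < lam) (A : Set ℕ) (n : ℕ) :
    |steinG lam A n| ≤ 2 * Real.exp lam := by
  have hep : (0:ℝ) < Real.exp lam := Real.exp_pos lam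
  cases n with
  | zero =>
    have h0 : steinG lam A 0 = 0 := rfl
    rw [h0, abs_zero]
    positivity
  | succ j =>
    simp only [steinG]
    set S := Sr lam A (j+1) with hSdef
    set R := poissonProb lam A - S with hRdef
    set F := Fr lam (j+1) with hFdef
    have hPo : poissonProb lam A = S + R := by rw [hRdef]; ring
    have hRnn : 0 ≤ R := by rw [hRdef]; linarith [Sr_le_po hlam A (j+1)]
    have hSnn : 0 ≤ S := Sr_nonneg hlam A (j+1)
    have hSF : S ≤ F := Sr_le_Fr hlam A (j+1)
    have hF1 : F ≤ 1 := Fr_le_one hlam (j+1)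
    have hF0 : 0 ≤ F := Fr_nonneg hlam (j+1)
    have hRle : R ≤ 1 - F := by
      have := po_sub_Sr_le hlam A (j+1); rw [← hRdef] at this; exact this
    have habs : |S - poissonProb lam A * F| ≤ 2 * (1 - F) := by
      rw [hPo]
      have h1 : S - (S + R) * F = S * (1 - F) - R * F := by ring
      rw [h1]
      have h2 : |S * (1 - F) - R * F| ≤ S * (1-F) + R * F :=
        (abs_sub _ _).trans (by
          rw [abs_of_nonneg (by nlinarith), abs_of_nonneg (by nlinarith)])
      nlinarith
    have htail := tail_le hlam j
    rw [abs_mul]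
    have hcoef : |Real.exp lam * (Nat.factorial j : ℝ) / lam ^ (j+1)|
        = Real.exp lam * (Nat.factorial j : ℝ) / lam ^ (j+1) := by
      rw [abs_of_nonneg]; positivity
    rw [hcoef]
    have hfj : (0:ℝ) < (Nat.factorial j : ℝ) := by exact_mod_cast Nat.factorial_pos j
    calc Real.exp lam * (Nat.factorial j : ℝ) / lam ^ (j+1) * |S - poissonProb lam A * F|
        ≤ Real.exp lam * (Nat.factorial j : ℝ) / lam ^ (j+1) * (2 * (1 - F)) := by
          apply mul_le_mul_of_nonneg_left habs (by positivity)
      _ ≤ Real.exp lam * (Nat.factorial j : ℝ) / lam ^ (j+1) *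
            (2 * (lam ^ (j+1) / (Nat.factorial j : ℝ))) := by
          apply mul_le_mul_of_nonneg_left _ (by positivity)
          linarith
      _ = 2 * Real.exp lam := by field_simp



lemma main_bound {Ω : Type*} [MeasurableSpace Ω] (P : Measure Ω) [IsProbabilityMeasure P]
    (hlam : 0 < lam)
    (W : Ω → ℕ) (hW : Measurable W) (hint : Integrable (fun ω => (W ω : ℝ)) P)
    (τ : ℕ → ℝ) (hτ : Integrable (fun ω => τ (W ω)) P)
    (hstein : ∀ g : ℕ → ℝ, (∃ C : ℝ, ∀ j : ℕ, |g j| ≤ C) →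
      ∫ ω, ((W ω : ℝ) - lam) * g (W ω) ∂P =
        ∫ ω, τ (W ω) * (g (W ω + 1) - g (W ω)) ∂P)
    (A : Set ℕ) :
    |(P {ω | W ω ∈ A}).toReal - poissonProb lam A| ≤
      (1 - Real.exp (-lam)) / lam * ∫ ω, |τ (W ω) - lam| ∂P := by
  classical
  set g := steinG lam A with hg
  set c := (1 - Real.exp (-lam)) / lam with hc
  have hcnn : 0 ≤ c := by
    have h5 : Real.exp (-lam) ≤ 1 := by rw [Real.exp_le_one_iff]; linarith
    apply div_nonneg (by linarith) hlam.le
  have hmeas : ∀ f : ℕ → ℝ, Measurable (fun ω => f (W ω)) :=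
    fun f => Measurable.of_discrete.comp hW
  have hmeas1 : Measurable (fun ω => g (W ω + 1)) :=
    (Measurable.of_discrete (f := fun n : ℕ => g (n+1))).comp hW
  -- integrability
  have ig0 : Integrable (fun ω => g (W ω)) P := by
    refine Integrable.mono' (integrable_const (2 * Real.exp lam))
      (hmeas g).aestronglyMeasurable ?_
    filter_upwards with ω
    rw [Real.norm_eq_abs]; exact steinG_bounded hlam A _
  have ig1 : Integrable (fun ω => g (W ω + 1)) P := by
    refine Integrable.mono' (integrable_const (2 * Real.exp lam))
      hmeas1.aestronglyMeasurable ?_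
    filter_upwards with ω
    rw [Real.norm_eq_abs]; exact steinG_bounded hlam A _
  have igW : Integrable (fun ω => (W ω : ℝ) * g (W ω)) P := by
    refine Integrable.mono' (hint.const_mul (2 * Real.exp lam))
      ((hmeas (fun n : ℕ => (n:ℝ))).mul (hmeas g)).aestronglyMeasurable ?_
    filter_upwards with ω
    rw [Real.norm_eq_abs, abs_mul, Nat.abs_cast, mul_comm (2 * Real.exp lam) _]
    exact mul_le_mul_of_nonneg_left (steinG_bounded hlam A _) (Nat.cast_nonneg _)
  -- the indicator integral
  have hAmeas : MeasurableSet (W ⁻¹' A) := hW MeasurableSet.of_discrete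
  have i_ind : Integrable (fun ω => Set.indicator A (fun _ => (1:ℝ)) (W ω)) P := by
    refine Integrable.mono' (integrable_const 1) ?_ ?_
    · exact (hmeas (Set.indicator A (fun _ => (1:ℝ)))).aestronglyMeasurable
    · filter_upwards with ω
      rw [Real.norm_eq_abs]
      rw [Set.indicator_apply]
      split <;> simp
  have h_ind : ∫ ω, Set.indicator A (fun _ => (1:ℝ)) (W ω) ∂P = (P {ω | W ω ∈ A}).toReal := by
    have heq : (fun ω => Set.indicator A (fun _ => (1:ℝ)) (W ω))
        = Set.indicator (W ⁻¹' A) (fun _ => (1:ℝ)) := by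
      funext ω
      rw [Set.indicator_apply, Set.indicator_apply]
      rfl
    rw [heq, integral_indicator_const (1:ℝ) hAmeas]
    simp [Set.preimage, measureReal_def]
  -- pointwise stein equation under the integral
  have h1 : ∫ ω, (lam * g (W ω + 1) - (W ω : ℝ) * g (W ω)) ∂P
      = (P {ω | W ω ∈ A}).toReal - poissonProb lam A := by
    have heq : (fun ω => lam * g (W ω + 1) - (W ω : ℝ) * g (W ω))
        = fun ω => Set.indicator A (fun _ => (1:ℝ)) (W ω) - poissonProb lam A := by
      funext ω
      exact stein_eq hlam A (W ω)
    rw [heq, integral_sub i_ind (integrable_const _), h_ind, integral_const]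
    simp
  -- use the hypothesis
  have hst := hstein g ⟨2 * Real.exp lam, fun j => steinG_bounded hlam A j⟩
  have h2 : ∫ ω, ((W ω : ℝ) - lam) * g (W ω) ∂P
      = ∫ ω, (W ω : ℝ) * g (W ω) ∂P - lam * ∫ ω, g (W ω) ∂P := by
    have heq : (fun ω => ((W ω : ℝ) - lam) * g (W ω))
        = fun ω => (W ω : ℝ) * g (W ω) - lam * g (W ω) := by
      funext ω; ring
    rw [heq, integral_sub igW (ig0.const_mul lam), integral_const_mul]
  have h3 : ∫ ω, (lam * g (W ω + 1) - (W ω : ℝ) * g (W ω)) ∂P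
      = lam * ∫ ω, g (W ω + 1) ∂P - ∫ ω, (W ω : ℝ) * g (W ω) ∂P := by
    rw [integral_sub (ig1.const_mul lam) igW, integral_const_mul]
  -- final form
  have h4 : (P {ω | W ω ∈ A}).toReal - poissonProb lam A
      = ∫ ω, (lam - τ (W ω)) * (g (W ω + 1) - g (W ω)) ∂P := by
    have iD : Integrable (fun ω => g (W ω + 1) - g (W ω)) P := ig1.sub ig0
    have iτD : Integrable (fun ω => τ (W ω) * (g (W ω + 1) - g (W ω))) P := by
      refine Integrable.mono' ((hτ.abs).const_mul (2 * (2 * Real.exp lam)))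
        ((hmeas τ).mul (hmeas1.sub (hmeas g))).aestronglyMeasurable ?_
      filter_upwards with ω
      rw [Real.norm_eq_abs, abs_mul, mul_comm (2 * (2 * Real.exp lam)) _]
      refine mul_le_mul_of_nonneg_left ?_ (abs_nonneg _)
      calc |g (W ω + 1) - g (W ω)| ≤ |g (W ω + 1)| + |g (W ω)| := abs_sub _ _
        _ ≤ 2 * Real.exp lam + 2 * Real.exp lam := by
            have := steinG_bounded hlam A (W ω + 1)
            have := steinG_bounded hlam A (W ω)
            linarith
        _ = 2 * (2 * Real.exp lam) := by ring
    have heq : (fun ω => (lam - τ (W ω)) * (g (W ω + 1) - g (W ω)))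
        = fun ω => lam * (g (W ω + 1) - g (W ω)) - τ (W ω) * (g (W ω + 1) - g (W ω)) := by
      funext ω; ring
    rw [heq, integral_sub (iD.const_mul lam) iτD, integral_const_mul, ← hst, h2,
      integral_sub ig1 ig0]
    rw [← h1, h3]
    ring
  rw [h4]
  -- bound the integral
  have ibnd : Integrable (fun ω => |(lam - τ (W ω)) * (g (W ω + 1) - g (W ω))|) P := by
    refine Integrable.mono' (((hτ.sub (integrable_const lam)).abs).const_mul c)
      (((measurable_const.sub (hmeas τ)).mul (hmeas1.sub (hmeas g))).abs).aestronglyMeasurable ?_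
    filter_upwards with ω
    rw [Real.norm_eq_abs, abs_abs, abs_mul]
    have h6 : |lam - τ (W ω)| = |τ (W ω) - lam| := abs_sub_comm _ _
    rw [h6, mul_comm c _]
    exact mul_le_mul_of_nonneg_left (delta_abs hlam A _) (abs_nonneg _)
  calc |∫ ω, (lam - τ (W ω)) * (g (W ω + 1) - g (W ω)) ∂P|
      ≤ ∫ ω, |(lam - τ (W ω)) * (g (W ω + 1) - g (W ω))| ∂P := by
        simpa only [Real.norm_eq_abs] using
          norm_integral_le_integral_norm (μ := P)
            (fun ω => (lam - τ (W ω)) * (g (W ω + 1) - g (W ω)))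
    _ ≤ ∫ ω, c * |τ (W ω) - lam| ∂P := by
        refine integral_mono ibnd (((hτ.sub (integrable_const lam)).abs).const_mul c) ?_
        intro ω
        dsimp only
        rw [abs_mul, abs_sub_comm lam _, mul_comm c _]
        exact mul_le_mul_of_nonneg_left (delta_abs hlam A _) (abs_nonneg _)
    _ = c * ∫ ω, |τ (W ω) - lam| ∂P := integral_const_mul c _


end SteinAux

/-- Let `λ > 0`, `W` a `ℕ`-valued random variable with `E[W] < ∞`, and
`τ : ℕ → ℝ` with `E|τ(W)| < ∞` such that `E[(W − λ) g(W)] = E[τ(W) Δg(W)]` for every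
bounded `g`. Then `d_TV(L(W), Po(λ)) ≤ ((1 − e^{−λ})/λ) E|τ(W) − λ|`. -/
theorem dTV_le_of_tau
    {Ω : Type*} [MeasurableSpace Ω] (P : Measure Ω) [IsProbabilityMeasure P]
    (lam : ℝ) (hlam : 0 < lam)
    (W : Ω → ℕ) (hW : Measurable W) (hint : Integrable (fun ω => (W ω : ℝ)) P)
    (τ : ℕ → ℝ) (hτ : Integrable (fun ω => τ (W ω)) P)
    (hstein : ∀ g : ℕ → ℝ, (∃ C : ℝ, ∀ j : ℕ, |g j| ≤ C) →
      ∫ ω, ((W ω : ℝ) - lam) * g (W ω) ∂P =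
        ∫ ω, τ (W ω) * (g (W ω + 1) - g (W ω)) ∂P) :
    (⨆ A : Set ℕ, |(P {ω | W ω ∈ A}).toReal - poissonProb lam A|) ≤
      (1 - Real.exp (-lam)) / lam * ∫ ω, |τ (W ω) - lam| ∂P :=
  ciSup_le fun A => SteinAux.main_bound P hlam W hW hint τ hτ hstein A
end

section
/- Let λ > 0, let k ≥ 1 be an integer, and let W be a ℤ≥0-valued random variable with E[W] < ∞ such that E[(W − λ) g(W)] = E[(λ + 1{W = k}) (g(W+1) − g(W))] for every bounded function g : ℤ≥0 → ℝ. Then d_TV(L(W), Po(λ)) = P[W = k] · sup_{A ⊆ ℤ≥0} |g_A(k+1) − g_A(k)|, where g_A denotes the canonical solution of the Stein equation, g_A(0) = 0 and g_A(j+1) = (j! / λ^{j+1}) Σ_{i=0}^{j} (1_A(i) − Po(λ)(A)) λ^i / i!. -/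
open MeasureTheory

lemma exp_tsum (x : ℝ) : ∑' n : ℕ, x ^ n / (n.factorial : ℝ) = Real.exp x := by
  rw [Real.exp_eq_exp_ℝ, NormedSpace.exp_eq_tsum_div]

lemma summable_pdf (lam : ℝ) : Summable (fun i : ℕ => lam ^ i / (i.factorial : ℝ)) :=
  Real.summable_pow_div_factorial lam

lemma summable_pmf (lam : ℝ) :
    Summable (fun j : ℕ => Real.exp (-lam) * lam ^ j / (j.factorial : ℝ)) :=
  ((summable_pdf lam).mul_left (Real.exp (-lam))).congr fun i => by ring

lemma pmf_tsum (lam : ℝ) : ∑' i : ℕ, Real.exp (-lam) * lam ^ i / (i.factorial : ℝ) = 1 := by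
  calc ∑' i : ℕ, Real.exp (-lam) * lam ^ i / (i.factorial : ℝ)
      = ∑' i : ℕ, Real.exp (-lam) * (lam ^ i / (i.factorial : ℝ)) := by
        congr 1; funext i; ring
    _ = Real.exp (-lam) * Real.exp lam := by rw [tsum_mul_left, exp_tsum]
    _ = 1 := by rw [← Real.exp_add]; simp

lemma pois_nonneg (lam : ℝ) (hlam : 0 < lam) (A : Set ℕ) : 0 ≤ poissonProb lam A := by
  refine tsum_nonneg fun i => Set.indicator_nonneg (fun j _ => ?_) i
  positivity

lemma pois_le_one (lam : ℝ) (hlam : 0 < lam) (A : Set ℕ) : poissonProb lam A ≤ 1 := by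
  rw [← pmf_tsum lam]
  refine Summable.tsum_le_tsum (fun i => Set.indicator_le_self' (fun j _ => by positivity) i)
    ((summable_pmf lam).indicator A) (summable_pmf lam)

lemma ind_mul_eq (lam : ℝ) (A : Set ℕ) :
    (fun i : ℕ => Set.indicator A (fun _ => (1 : ℝ)) i * lam ^ i / (i.factorial : ℝ)) =
      Set.indicator A (fun i : ℕ => lam ^ i / (i.factorial : ℝ)) := by
  funext i
  by_cases h : i ∈ A <;> simp [Set.indicator_of_mem, Set.indicator_of_notMem, h]

lemma ind_tsum (lam : ℝ) (A : Set ℕ) :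
    ∑' i : ℕ, Set.indicator A (fun _ => (1 : ℝ)) i * lam ^ i / (i.factorial : ℝ) =
      Real.exp lam * poissonProb lam A := by
  rw [poissonProb, ← tsum_mul_left]
  congr 1; funext i
  by_cases h : i ∈ A <;>
    simp [Set.indicator_of_mem, Set.indicator_of_notMem, h]
  rw [mul_div_assoc', ← mul_assoc, ← Real.exp_add]
  simp

lemma summable_f (lam : ℝ) (A : Set ℕ) :
    Summable (fun i : ℕ =>
      (Set.indicator A (fun _ => (1 : ℝ)) i - poissonProb lam A) * lam ^ i /
        (i.factorial : ℝ)) := by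
  have h : (fun i : ℕ => (Set.indicator A (fun _ => (1 : ℝ)) i - poissonProb lam A) * lam ^ i /
      (i.factorial : ℝ)) = fun i =>
      Set.indicator A (fun i : ℕ => lam ^ i / (i.factorial : ℝ)) i -
        poissonProb lam A * (lam ^ i / (i.factorial : ℝ)) := by
    funext i
    rw [← congrFun (ind_mul_eq lam A) i]; ring
  rw [h]
  exact ((summable_pdf lam).indicator A).sub ((summable_pdf lam).mul_left _)

lemma tsum_f (lam : ℝ) (A : Set ℕ) :
    ∑' i : ℕ, (Set.indicator A (fun _ => (1 : ℝ)) i - poissonProb lam A) * lam ^ i /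
        (i.factorial : ℝ) = 0 := by
  have h : (fun i : ℕ => (Set.indicator A (fun _ => (1 : ℝ)) i - poissonProb lam A) * lam ^ i /
      (i.factorial : ℝ)) = fun i =>
      Set.indicator A (fun _ => (1 : ℝ)) i * lam ^ i / (i.factorial : ℝ) -
        poissonProb lam A * (lam ^ i / (i.factorial : ℝ)) := by
    funext i; ring
  rw [h, Summable.tsum_sub, ind_tsum, tsum_mul_left, exp_tsum]
  · ring
  · exact (((summable_pdf lam).indicator A).congr fun i =>
      (congrFun (ind_mul_eq lam A) i).symm)
  · exact (summable_pdf lam).mul_left _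

lemma stein_eq (lam : ℝ) (hlam : 0 < lam) (A : Set ℕ) (j : ℕ) :
    lam * steinSol lam A (j + 1) - (j : ℝ) * steinSol lam A j =
      Set.indicator A (fun _ => (1 : ℝ)) j - poissonProb lam A := by
  have hl : lam ≠ 0 := ne_of_gt hlam
  cases j with
  | zero =>
      simp [steinSol]
      field_simp
  | succ m =>
      rw [steinSol, steinSol, Finset.sum_range_succ]
      set S : ℝ := ∑ i ∈ Finset.range (m + 1),
        (Set.indicator A (fun _ => (1 : ℝ)) i - poissonProb lam A) * lam ^ i /
          (Nat.factorial i : ℝ) with hS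
      have hfac : ((m + 1).factorial : ℝ) = (m + 1) * (m.factorial : ℝ) := by
        push_cast [Nat.factorial_succ]; ring
      have hfm : (m.factorial : ℝ) ≠ 0 := by positivity
      have hfm1 : ((m + 1).factorial : ℝ) ≠ 0 := by positivity
      field_simp
      rw [hfac]
      push_cast; ring

set_option maxHeartbeats 1000000 in
lemma stein_bound (lam : ℝ) (hlam : 0 < lam) (A : Set ℕ) (j : ℕ) :
    |steinSol lam A j| ≤ Real.exp lam := by
  cases j with
  | zero => simp [steinSol]; positivity
  | succ n =>
      set f : ℕ → ℝ := fun i =>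
        (Set.indicator A (fun _ => (1 : ℝ)) i - poissonProb lam A) * lam ^ i /
          (Nat.factorial i : ℝ) with hf
      have hsum : Summable f := summable_f lam A
      have key : (∑ i ∈ Finset.range (n + 1), f i) = -∑' m : ℕ, f (m + (n + 1)) := by
        have := Summable.sum_add_tsum_nat_add (n + 1) hsum
        rw [tsum_f lam A] at this
        linarith
      have habs : ∀ i : ℕ, |f i| ≤ lam ^ i / (i.factorial : ℝ) := by
        intro i
        have h1 : |Set.indicator A (fun _ => (1 : ℝ)) i - poissonProb lam A| ≤ 1 := by
          have := pois_nonneg lam hlam A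
          have := pois_le_one lam hlam A
          by_cases h : i ∈ A <;>
            simp [Set.indicator_of_mem, Set.indicator_of_notMem, h, abs_le] <;>
            constructor <;> linarith
        calc |f i| = |Set.indicator A (fun _ => (1 : ℝ)) i - poissonProb lam A| * lam ^ i /
              (i.factorial : ℝ) := by
              rw [hf, abs_div, abs_mul, abs_of_nonneg (by positivity : (0:ℝ) ≤ lam ^ i),
                abs_of_nonneg (by positivity : (0:ℝ) ≤ ((i.factorial : ℝ)))]
          _ ≤ 1 * lam ^ i / (i.factorial : ℝ) := by gcongr
          _ = lam ^ i / (i.factorial : ℝ) := by ring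
      have hshift : Summable (fun m : ℕ => f (m + (n + 1))) :=
        (summable_nat_add_iff (f := f) (n + 1)).2 hsum
      have hshift2 : Summable (fun m : ℕ => lam ^ (m + (n + 1)) / ((m + (n + 1)).factorial : ℝ)) :=
        (summable_nat_add_iff (f := fun i : ℕ => lam ^ i / (i.factorial : ℝ)) (n + 1)).2 (summable_pdf lam)
      have hT : |∑' m : ℕ, f (m + (n + 1))| ≤
          ∑' m : ℕ, lam ^ (m + (n + 1)) / ((m + (n + 1)).factorial : ℝ) := by
        calc |∑' m : ℕ, f (m + (n + 1))| ≤ ∑' m : ℕ, |f (m + (n + 1))| := by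
              simpa [Real.norm_eq_abs] using
                norm_tsum_le_tsum_norm (f := fun m : ℕ => f (m + (n + 1)))
                  (by simpa [Real.norm_eq_abs] using hshift.abs)
          _ ≤ ∑' m : ℕ, lam ^ (m + (n + 1)) / ((m + (n + 1)).factorial : ℝ) :=
              Summable.tsum_le_tsum (fun m => habs (m + (n + 1))) hshift.abs hshift2
      have hcoef : (0:ℝ) ≤ (n.factorial : ℝ) / lam ^ (n + 1) := by positivity
      have step1 : |steinSol lam A (n + 1)| ≤
          (n.factorial : ℝ) / lam ^ (n + 1) *
            ∑' m : ℕ, lam ^ (m + (n + 1)) / ((m + (n + 1)).factorial : ℝ) := by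
        rw [steinSol, abs_mul, abs_of_nonneg hcoef, key, abs_neg]
        exact mul_le_mul_of_nonneg_left hT hcoef
      refine step1.trans ?_
      rw [← tsum_mul_left]
      have hterm : ∀ m : ℕ, (n.factorial : ℝ) / lam ^ (n + 1) *
          (lam ^ (m + (n + 1)) / ((m + (n + 1)).factorial : ℝ)) ≤
            lam ^ m / (m.factorial : ℝ) := by
        intro m
        have hfact : (n.factorial : ℝ) * (m.factorial : ℝ) ≤ ((m + (n + 1)).factorial : ℝ) := by
          have h1 : m.factorial * n.factorial ≤ (m + n).factorial :=
            Nat.le_of_dvd (Nat.factorial_pos _) (Nat.factorial_mul_factorial_dvd_factorial_add m n)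
          have h2 : (m + n).factorial ≤ (m + (n + 1)).factorial := Nat.factorial_le (by omega)
          exact_mod_cast (Nat.mul_comm _ _ ▸ h1).trans h2
        have heq : (n.factorial : ℝ) / lam ^ (n + 1) *
            (lam ^ (m + (n + 1)) / ((m + (n + 1)).factorial : ℝ)) =
              lam ^ m * ((n.factorial : ℝ) / ((m + (n + 1)).factorial : ℝ)) := by
          rw [pow_add]
          have : lam ^ (n + 1) ≠ 0 := by positivity
          field_simp
          ring
        rw [heq]
        have hdiv : (n.factorial : ℝ) / ((m + (n + 1)).factorial : ℝ) ≤ 1 / (m.factorial : ℝ) := by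
          rw [div_le_div_iff₀ (by positivity) (by positivity)]
          linarith [hfact]
        calc lam ^ m * ((n.factorial : ℝ) / ((m + (n + 1)).factorial : ℝ))
            ≤ lam ^ m * (1 / (m.factorial : ℝ)) :=
              mul_le_mul_of_nonneg_left hdiv (by positivity)
          _ = lam ^ m / (m.factorial : ℝ) := by ring
      calc (∑' m : ℕ, (n.factorial : ℝ) / lam ^ (n + 1) *
            (lam ^ (m + (n + 1)) / ((m + (n + 1)).factorial : ℝ)))
          ≤ ∑' m : ℕ, lam ^ m / (m.factorial : ℝ) :=
            Summable.tsum_le_tsum hterm (hshift2.mul_left _) (summable_pdf lam)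
        _ = Real.exp lam := exp_tsum lam

lemma integrable_of_bdd {Ω : Type*} [MeasurableSpace Ω] (P : Measure Ω) [IsProbabilityMeasure P]
    {f : Ω → ℝ} (hf : Measurable f) {C : ℝ} (hC : ∀ ω, |f ω| ≤ C) : Integrable f P :=
  Integrable.mono' (integrable_const C) hf.aestronglyMeasurable
    (Filter.Eventually.of_forall fun ω => by simpa [Real.norm_eq_abs] using hC ω)

/-- Let `λ > 0`, `k ≥ 1`, and let `W` be a `ℕ`-valued random variable with
`E[W] < ∞` such that `E[(W − λ) g(W)] = E[(λ + 1{W = k})(g(W+1) − g(W))]` for every bounded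
`g`. Then `d_TV(L(W), Po(λ)) = P[W = k] · sup_{A ⊆ ℤ≥0} |g_A(k+1) − g_A(k)|`. -/
theorem dTV_of_perturbed_eq
    {Ω : Type*} [MeasurableSpace Ω] (P : Measure Ω) [IsProbabilityMeasure P]
    (lam : ℝ) (hlam : 0 < lam) (k : ℕ) (hk : 1 ≤ k)
    (W : Ω → ℕ) (hW : Measurable W) (hint : Integrable (fun ω => (W ω : ℝ)) P)
    (hstein : ∀ g : ℕ → ℝ, (∃ C : ℝ, ∀ j : ℕ, |g j| ≤ C) →
      ∫ ω, ((W ω : ℝ) - lam) * g (W ω) ∂P =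
        ∫ ω, (lam + if W ω = k then (1 : ℝ) else 0) * (g (W ω + 1) - g (W ω)) ∂P) :
    (⨆ A : Set ℕ, |(P {ω | W ω ∈ A}).toReal - poissonProb lam A|) =
      (P {ω | W ω = k}).toReal *
        ⨆ A : Set ℕ, |steinSol lam A (k + 1) - steinSol lam A k| := by
  have hWk : MeasurableSet {ω | W ω = k} := hW (MeasurableSet.singleton k)
  have key : ∀ A : Set ℕ, (P {ω | W ω ∈ A}).toReal - poissonProb lam A =
      -((P {ω | W ω = k}).toReal * (steinSol lam A (k + 1) - steinSol lam A k)) := by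
    intro A
    set g : ℕ → ℝ := steinSol lam A with hg
    have hgb : ∀ j, |g j| ≤ Real.exp lam := stein_bound lam hlam A
    have hmg : Measurable fun ω => g (W ω) := (measurable_from_top (f := g)).comp hW
    have hmg1 : Measurable fun ω => g (W ω + 1) :=
      (measurable_from_top (f := fun n => g (n + 1))).comp hW
    have hmD : Measurable fun ω => g (W ω + 1) - g (W ω) := hmg1.sub hmg
    have hDb : ∀ ω, |g (W ω + 1) - g (W ω)| ≤ 2 * Real.exp lam := fun ω =>
      (abs_sub _ _).trans (by linarith [hgb (W ω + 1), hgb (W ω)])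
    have I1 : Integrable (fun ω => lam * (g (W ω + 1) - g (W ω))) P := by
      refine integrable_of_bdd P (measurable_const.mul hmD) (C := lam * (2 * Real.exp lam)) ?_
      intro ω
      rw [abs_mul, abs_of_pos hlam]
      exact mul_le_mul_of_nonneg_left (hDb ω) hlam.le
    have I2 : Integrable (fun ω => (if W ω = k then (1:ℝ) else 0) *
        (g (W ω + 1) - g (W ω))) P := by
      refine integrable_of_bdd P (Measurable.mul ?_ hmD) (C := 2 * Real.exp lam) ?_
      · exact measurable_const.ite hWk measurable_const
      · intro ω
        rw [abs_mul]
        by_cases h : W ω = k <;> simp [h]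
        · exact (abs_sub _ _).trans (by linarith [hgb (k + 1), hgb k])
        · positivity
    have I3 : Integrable (fun ω => ((W ω : ℝ) - lam) * g (W ω)) P := by
      refine Integrable.mono' ((hint.add (integrable_const lam)).mul_const (Real.exp lam))
        ((((measurable_from_top (f := fun n : ℕ => (n:ℝ))).comp hW).sub measurable_const).mul hmg).aestronglyMeasurable
        (Filter.Eventually.of_forall fun ω => ?_)
      rw [Real.norm_eq_abs, abs_mul]
      have h1 : |(W ω : ℝ) - lam| ≤ (W ω : ℝ) + lam := by
        have : (0:ℝ) ≤ (W ω : ℝ) := Nat.cast_nonneg _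
        rw [abs_le]; constructor <;> linarith
      have h2 : (0:ℝ) ≤ (W ω : ℝ) + lam := by positivity
      calc |(W ω : ℝ) - lam| * |g (W ω)| ≤ ((W ω : ℝ) + lam) * Real.exp lam :=
        mul_le_mul h1 (hgb (W ω)) (abs_nonneg _) h2
        _ = _ := rfl
    have I4 : Integrable (fun ω => Set.indicator A (fun _ => (1:ℝ)) (W ω)) P := by
      refine integrable_of_bdd P ((measurable_from_top
        (f := fun n => Set.indicator A (fun _ => (1:ℝ)) n)).comp hW) (C := 1) fun ω => ?_
      by_cases h : W ω ∈ A <;> simp [Set.indicator_of_mem, Set.indicator_of_notMem, h]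
    have hs := hstein g ⟨Real.exp lam, hgb⟩
    -- split the RHS of hs
    have hsplit : ∫ ω, (lam + if W ω = k then (1:ℝ) else 0) * (g (W ω + 1) - g (W ω)) ∂P =
        (∫ ω, lam * (g (W ω + 1) - g (W ω)) ∂P) +
          ∫ ω, (if W ω = k then (1:ℝ) else 0) * (g (W ω + 1) - g (W ω)) ∂P := by
      rw [← integral_add I1 I2]
      congr 1; funext ω; ring
    -- the indicator integral
    have hind : ∫ ω, (if W ω = k then (1:ℝ) else 0) * (g (W ω + 1) - g (W ω)) ∂P =
        (P {ω | W ω = k}).toReal * (g (k + 1) - g k) := by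
      have : (fun ω => (if W ω = k then (1:ℝ) else 0) * (g (W ω + 1) - g (W ω))) =
          Set.indicator {ω | W ω = k} (fun _ => g (k + 1) - g k) := by
        funext ω
        by_cases h : W ω = k <;>
          simp [Set.indicator_of_mem, Set.indicator_of_notMem, h, Set.mem_setOf_eq]
      rw [this, integral_indicator_const _ hWk, smul_eq_mul, mul_comm]
      exact mul_comm _ _
    -- left-hand side via the Stein equation
    have hlhs : ∫ ω, (Set.indicator A (fun _ => (1:ℝ)) (W ω) - poissonProb lam A) ∂P =
        (∫ ω, lam * (g (W ω + 1) - g (W ω)) ∂P) - ∫ ω, ((W ω : ℝ) - lam) * g (W ω) ∂P := by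
      rw [← integral_sub I1 I3]
      congr 1; funext ω
      have := stein_eq lam hlam A (W ω)
      rw [hg]
      nlinarith [this]
    have hlhs2 : ∫ ω, (Set.indicator A (fun _ => (1:ℝ)) (W ω) - poissonProb lam A) ∂P =
        (P {ω | W ω ∈ A}).toReal - poissonProb lam A := by
      rw [integral_sub I4 (integrable_const _), integral_const]
      have : (fun ω => Set.indicator A (fun _ => (1:ℝ)) (W ω)) =
          Set.indicator {ω | W ω ∈ A} (fun _ => (1:ℝ)) := by
        funext ω
        by_cases h : W ω ∈ A <;>
          simp [Set.indicator_of_mem, Set.indicator_of_notMem, h, Set.mem_setOf_eq]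
      rw [this, integral_indicator_const (1:ℝ) (s := {ω | W ω ∈ A}) (hW (by trivial : MeasurableSet A))]
      simp
      rfl
    rw [hlhs2, hs, hsplit, hind] at hlhs
    rw [hlhs]; ring
  have habs : ∀ A : Set ℕ, |(P {ω | W ω ∈ A}).toReal - poissonProb lam A| =
      (P {ω | W ω = k}).toReal * |steinSol lam A (k + 1) - steinSol lam A k| := by
    intro A
    rw [key A, abs_neg, abs_mul, abs_of_nonneg ENNReal.toReal_nonneg]
  rw [iSup_congr habs, ← Real.mul_iSup_of_nonneg ENNReal.toReal_nonneg]
end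

section
/- Let λ > 0 and let k ≥ 1 be an integer. There exists a unique probability mass function p on ℤ≥0 such that Σ_{w ≥ 0} p(w) [(λ + 1{w = k}) g(w+1) − (w + 1{w = k}) g(w)] = 0 for every bounded function g : ℤ≥0 → ℝ; equivalently, p is the unique probability mass function satisfying p(w) (w + 1{w = k}) = p(w−1) (λ + 1{w−1 = k}) for all w ≥ 1. Moreover p(k) > 0 and Σ_{w} w p(w) < ∞. -/
/-- `p` is a probability mass function on `ℕ`. -/
def IsPmf (p : ℕ → ℝ) : Prop :=
  (∀ w, 0 ≤ p w) ∧ HasSum p 1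

/-- `p` annihilates the perturbed Poisson Stein operator
`B_k g(w) = (λ + 1{w = k}) g(w+1) − (w + 1{w = k}) g(w)` for all bounded `g`, i.e.
`Σ_w p(w) B_k g(w) = 0` (the series converging) for every bounded `g : ℕ → ℝ`. -/
def SteinStationary (lam : ℝ) (k : ℕ) (p : ℕ → ℝ) : Prop :=
  ∀ g : ℕ → ℝ, (∃ C : ℝ, ∀ j : ℕ, |g j| ≤ C) →
    HasSum (fun w : ℕ =>
      p w * ((lam + if w = k then (1 : ℝ) else 0) * g (w + 1) -
        ((w : ℝ) + if w = k then (1 : ℝ) else 0) * g w)) 0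

/-- The detailed-balance recursion `p(w)(w + 1{w = k}) = p(w−1)(λ + 1{w−1 = k})`, `w ≥ 1`. -/
def SteinRecursion (lam : ℝ) (k : ℕ) (p : ℕ → ℝ) : Prop :=
  ∀ w : ℕ, 1 ≤ w →
    p w * ((w : ℝ) + if w = k then (1 : ℝ) else 0) =
      p (w - 1) * (lam + if w - 1 = k then (1 : ℝ) else 0)

open Filter Finset

/-- The unnormalized stationary sequence. -/
noncomputable def qfun (lam : ℝ) (k : ℕ) : ℕ → ℝ
  | 0 => 1
  | (w+1) => qfun lam k w * (lam + if w = k then 1 else 0) /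
      (((w : ℝ) + 1) + if w + 1 = k then 1 else 0)

section Aux

variable {lam : ℝ} {k : ℕ}

lemma num_pos (hlam : 0 < lam) (w : ℕ) : 0 < lam + (if w = k then (1:ℝ) else 0) := by
  split <;> linarith

lemma den_pos (w : ℕ) : 0 < ((w : ℝ) + 1) + if w + 1 = k then (1:ℝ) else 0 := by
  have : (0:ℝ) ≤ (w : ℝ) := Nat.cast_nonneg w
  split <;> linarith

lemma qfun_pos (hlam : 0 < lam) : ∀ w, 0 < qfun lam k w
  | 0 => one_pos
  | (w+1) => div_pos (mul_pos (qfun_pos hlam w) (num_pos hlam w)) (den_pos w)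

lemma qfun_rec (w : ℕ) :
    qfun lam k (w+1) * (((w:ℝ)+1) + if w+1 = k then 1 else 0) =
      qfun lam k w * (lam + if w = k then 1 else 0) := by
  show qfun lam k w * (lam + if w = k then 1 else 0) /
      (((w : ℝ) + 1) + if w + 1 = k then 1 else 0) * _ = _
  rw [div_mul_cancel₀ _ (den_pos w).ne']

lemma qfun_summable (hlam : 0 < lam) : Summable (qfun lam k) := by
  apply summable_of_ratio_norm_eventually_le (r := 1/2) (by norm_num)
  filter_upwards [eventually_ge_atTop ⌈2*(lam+1)⌉₊] with w hw
  have hcast : 2*(lam+1) ≤ (w:ℝ) := le_trans (Nat.le_ceil _) (by exact_mod_cast hw)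
  have hq := (qfun_pos (k := k) hlam w).le
  rw [Real.norm_of_nonneg (qfun_pos hlam (w+1)).le, Real.norm_of_nonneg hq]
  have h1 : qfun lam k (w+1) ≤ qfun lam k w * (lam+1) / (2*(lam+1)) := by
    show qfun lam k w * (lam + if w = k then 1 else 0) /
        (((w : ℝ) + 1) + if w + 1 = k then 1 else 0) ≤ _
    have hnum : lam + (if w = k then (1:ℝ) else 0) ≤ lam + 1 := by split <;> linarith
    have hden : 2*(lam+1) ≤ ((w : ℝ) + 1) + if w + 1 = k then (1:ℝ) else 0 := by
      split <;> linarith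
    calc qfun lam k w * (lam + if w = k then 1 else 0) /
          (((w : ℝ) + 1) + if w + 1 = k then 1 else 0)
        ≤ qfun lam k w * (lam+1) / (((w : ℝ) + 1) + if w + 1 = k then 1 else 0) := by
          gcongr
      _ ≤ qfun lam k w * (lam+1) / (2*(lam+1)) := by
          gcongr
          all_goals first | positivity | linarith
  have : qfun lam k w * (lam+1) / (2*(lam+1)) = 1/2 * qfun lam k w := by
    field_simp
  linarith [h1, this ▸ h1]

/-- Stationarity implies the recursion (using indicator test functions). -/
lemma stat_to_rec (hk : 1 ≤ k) (p : ℕ → ℝ) (hstat : SteinStationary lam k p) :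
    SteinRecursion lam k p := by
  intro w hw
  obtain ⟨v, rfl⟩ : ∃ v, w = v + 1 := ⟨w - 1, (Nat.succ_pred_eq_of_pos hw).symm⟩
  set g : ℕ → ℝ := fun j => if j = v + 1 then 1 else 0 with hg
  have hgb : ∃ C : ℝ, ∀ j : ℕ, |g j| ≤ C := by
    refine ⟨1, fun j => ?_⟩
    simp only [hg]
    split <;> simp
  have h0 := hstat g hgb
  set t : ℕ → ℝ := fun j => p j * ((lam + if j = k then (1 : ℝ) else 0) * g (j + 1) -
        ((j : ℝ) + if j = k then (1 : ℝ) else 0) * g j) with ht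
  have hfin : HasSum t (∑ b ∈ ({v, v+1} : Finset ℕ), t b) := by
    apply hasSum_sum_of_ne_finset_zero
    intro b hb
    simp only [Finset.mem_insert, Finset.mem_singleton, not_or] at hb
    have h1 : g (b + 1) = 0 := by
      simp only [hg]; rw [if_neg]; omega
    have h2 : g b = 0 := by
      simp only [hg]; rw [if_neg]; omega
    simp [ht, h1, h2]
  have hne : v ∉ ({v+1} : Finset ℕ) := by simp
  rw [Finset.sum_insert hne, Finset.sum_singleton] at hfin
  have heq : t v + t (v+1) = 0 := hfin.unique h0
  have h1 : g (v + 1) = 1 := by simp [hg]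
  have h2 : g v = 0 := by simp only [hg]; rw [if_neg]; omega
  have h3 : g (v + 1 + 1) = 0 := by simp only [hg]; rw [if_neg]; omega
  simp only [ht, h1, h2, h3, mul_zero, mul_one, zero_sub, sub_zero, mul_neg] at heq
  push_cast at heq
  have : p (v+1) * (((v:ℝ)+1) + if v + 1 = k then 1 else 0) =
      p v * (lam + if v = k then 1 else 0) := by linarith
  simpa [Nat.add_sub_cancel] using this

/-- The recursion gives `p = p 0 • qfun`. -/
lemma rec_scalar (hlam : 0 < lam) (p : ℕ → ℝ) (hrec : SteinRecursion lam k p) :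
    ∀ w, p w = p 0 * qfun lam k w := by
  intro w
  induction w with
  | zero => simp [qfun]
  | succ v ih =>
    have h := hrec (v+1) (Nat.le_add_left 1 v)
    simp only [Nat.add_sub_cancel] at h
    push_cast at h
    have hd := den_pos (k := k) v
    have hq := qfun_rec (lam := lam) (k := k) v
    have : p (v+1) * (((v:ℝ)+1) + if v+1 = k then 1 else 0) =
        p 0 * (qfun lam k (v+1) * (((v:ℝ)+1) + if v+1 = k then 1 else 0)) := by
      rw [hq, h, ih]; ring
    have := mul_right_cancel₀ hd.ne' (by linarith [this] : p (v+1) * (((v:ℝ)+1) + if v+1 = k then 1 else 0) = (p 0 * qfun lam k (v+1)) * (((v:ℝ)+1) + if v+1 = k then 1 else 0))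
    exact this

/-- From the recursion, `w * p w` is summable. -/
lemma rec_mean_summable (hlam : 0 < lam) (p : ℕ → ℝ) (hp : IsPmf p)
    (hrec : SteinRecursion lam k p) : Summable (fun w : ℕ => (w : ℝ) * p w) := by
  set M : ℕ → ℝ := fun w => if w = 0 then 0 else (lam+1) * p (w-1) with hM
  have hMsum : Summable M := by
    rw [← summable_nat_add_iff 1]
    have : (fun n => M (n+1)) = fun n => (lam+1) * p n := by
      funext n; simp [hM]
    rw [this]
    exact hp.2.summable.mul_left _
  apply Summable.of_norm_bounded hMsum
  intro w
  match w with
  | 0 => simp [hM]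
  | (v+1) =>
    have h := hrec (v+1) (Nat.le_add_left 1 v)
    simp only [Nat.add_sub_cancel] at h
    push_cast at h
    have hp1 := hp.1 (v+1)
    have hp0 := hp.1 v
    have hv : (0:ℝ) ≤ (v:ℝ) := Nat.cast_nonneg v
    rw [Real.norm_of_nonneg (by positivity)]
    have h1 : ((v:ℝ)+1) * p (v+1) ≤ p (v+1) * (((v:ℝ)+1) + if v+1 = k then 1 else 0) := by
      have : (0:ℝ) ≤ if v+1 = k then (1:ℝ) else 0 := by split <;> norm_num
      nlinarith
    have h2 : p v * (lam + if v = k then 1 else 0) ≤ (lam+1) * p v := by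
      have : (if v = k then (1:ℝ) else 0) ≤ 1 := by split <;> norm_num
      nlinarith
    simp only [hM]
    rw [if_neg (Nat.succ_ne_zero v)]
    simp only [Nat.add_sub_cancel]
    push_cast
    linarith

/-- The recursion plus pmf implies Stein stationarity. -/
lemma rec_to_stat (hlam : 0 < lam) (hk : 1 ≤ k) (p : ℕ → ℝ) (hp : IsPmf p)
    (hrec : SteinRecursion lam k p) : SteinStationary lam k p := by
  intro g ⟨C, hC⟩
  have hC0 : 0 ≤ C := le_trans (abs_nonneg _) (hC 0)
  set h : ℕ → ℝ := fun w => p w * (lam + if w = k then 1 else 0) * g (w+1) with hh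
  set B : ℕ → ℝ := fun w => if w = 0 then 0 else h (w-1) with hB
  set t : ℕ → ℝ := fun w => p w * ((lam + if w = k then (1 : ℝ) else 0) * g (w + 1) -
        ((w : ℝ) + if w = k then (1 : ℝ) else 0) * g w) with htdef
  -- t = h - B
  have ht : ∀ w, t w = h w - B w := by
    intro w
    match w with
    | 0 =>
      have : (0:ℕ) ≠ k := by omega
      simp only [htdef, hh, hB, if_neg this, Nat.cast_zero]
      ring_nf
      simp [this]
    | (v+1) =>
      have hr := hrec (v+1) (Nat.le_add_left 1 v)
      simp only [Nat.add_sub_cancel] at hr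
      simp only [htdef, hh, hB, if_neg (Nat.succ_ne_zero v), Nat.add_sub_cancel]
      push_cast at hr ⊢
      rw [mul_sub]
      rw [show p (v+1) * ((((v:ℝ))+1 + if v+1 = k then 1 else 0) * g (v+1)) =
          (p (v+1) * (((v:ℝ))+1 + if v+1 = k then 1 else 0)) * g (v+1) by ring, hr]
      ring
  -- summability of h
  have hhsum : Summable h := by
    apply Summable.of_norm_bounded (g := fun w => (lam+1) * C * p w)
      ((hp.2.summable.mul_left _))
    intro w
    simp only [hh, Real.norm_eq_abs, abs_mul]
    have h1 : |p w| = p w := abs_of_nonneg (hp.1 w)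
    have h2 : |lam + if w = k then (1:ℝ) else 0| ≤ lam + 1 := by
      rw [abs_of_nonneg (num_pos hlam w).le]; split <;> linarith
    rw [h1]
    calc p w * |lam + if w = k then (1:ℝ) else 0| * |g (w+1)|
        ≤ p w * (lam+1) * C := by
          apply mul_le_mul (mul_le_mul_of_nonneg_left h2 (hp.1 w)) (hC _)
            (abs_nonneg _) (mul_nonneg (hp.1 w) (by linarith))
      _ = (lam+1) * C * p w := by ring
  have hBsum : Summable B := by
    rw [← summable_nat_add_iff 1]
    have : (fun n => B (n+1)) = h := by
      funext n; simp [hB]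
    rw [this]; exact hhsum
  have htsum : Summable t := by
    have : t = fun w => h w - B w := funext ht
    rw [this]; exact hhsum.sub hBsum
  -- partial sums telescope
  have hpartial : ∀ m : ℕ, ∑ i ∈ Finset.range (m+1), t i = h m := by
    intro m
    have : ∑ i ∈ Finset.range (m+1), t i =
        ∑ i ∈ Finset.range (m+1), h i - ∑ i ∈ Finset.range (m+1), B i := by
      rw [← Finset.sum_sub_distrib]
      exact Finset.sum_congr rfl (fun i _ => ht i)
    rw [this, Finset.sum_range_succ' B m]
    have hB0 : B 0 = 0 := by simp [hB]
    have hBsucc : ∀ i, B (i+1) = h i := fun i => by simp [hB]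
    simp only [hB0, add_zero]
    rw [Finset.sum_congr rfl (fun i _ => hBsucc i), Finset.sum_range_succ]
    ring
  -- h m → 0
  have hp0 : Tendsto p atTop (nhds 0) := hp.2.summable.tendsto_atTop_zero
  have hh0 : Tendsto h atTop (nhds 0) := by
    apply squeeze_zero_norm (a := fun w => (lam+1) * C * p w)
    · intro w
      simp only [hh, Real.norm_eq_abs, abs_mul]
      have h1 : |p w| = p w := abs_of_nonneg (hp.1 w)
      have h2 : |lam + if w = k then (1:ℝ) else 0| ≤ lam + 1 := by
        rw [abs_of_nonneg (num_pos hlam w).le]; split <;> linarith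
      rw [h1]
      calc p w * |lam + if w = k then (1:ℝ) else 0| * |g (w+1)|
          ≤ p w * (lam+1) * C := by
            apply mul_le_mul (mul_le_mul_of_nonneg_left h2 (hp.1 w)) (hC _)
              (abs_nonneg _) (mul_nonneg (hp.1 w) (by linarith))
        _ = (lam+1) * C * p w := by ring
    · simpa using hp0.const_mul ((lam+1)*C)
  -- conclude
  have hL := htsum.hasSum
  have h1 : Tendsto (fun n => ∑ i ∈ Finset.range n, t i) atTop (nhds (∑' w, t w)) :=
    hL.tendsto_sum_nat
  have h2 : Tendsto (fun m : ℕ => ∑ i ∈ Finset.range (m+1), t i) atTop (nhds (∑' w, t w)) :=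
    h1.comp (tendsto_add_atTop_nat 1)
  have h3 : Tendsto (fun m : ℕ => ∑ i ∈ Finset.range (m+1), t i) atTop (nhds 0) := by
    simp only [hpartial]; exact hh0
  have : (∑' w, t w) = 0 := tendsto_nhds_unique h2 h3
  exact this ▸ hL

end Aux

/-- For `λ > 0` and an integer `k ≥ 1`, there is a unique probability mass
function `p` on `ℕ` with `Σ_w p(w) B_k g(w) = 0` for every bounded `g`; equivalently, a pmf has
this property iff it satisfies the recursion `p(w)(w + 1{w=k}) = p(w−1)(λ + 1{w−1=k})` for
`w ≥ 1`. Moreover such `p` has `p(k) > 0` and finite mean `Σ_w w p(w) < ∞`. -/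
theorem perturbed_stationary_exists_unique (lam : ℝ) (hlam : 0 < lam) (k : ℕ) (hk : 1 ≤ k) :
    (∃! p : ℕ → ℝ, IsPmf p ∧ SteinStationary lam k p) ∧
      (∀ p : ℕ → ℝ, IsPmf p → (SteinStationary lam k p ↔ SteinRecursion lam k p)) ∧
      (∀ p : ℕ → ℝ, IsPmf p → SteinStationary lam k p →
        0 < p k ∧ Summable (fun w : ℕ => (w : ℝ) * p w)) := by
  set S : ℝ := ∑' w, qfun lam k w with hSdef
  have hqsum : Summable (qfun lam k) := qfun_summable hlam
  have hS : HasSum (qfun lam k) S := hqsum.hasSum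
  have hSpos : 0 < S := Summable.tsum_pos hqsum (fun w => (qfun_pos hlam w).le) 0 (qfun_pos hlam 0)
  set pstar : ℕ → ℝ := fun w => qfun lam k w / S with hpstar
  have hpstar_pmf : IsPmf pstar := by
    constructor
    · intro w; exact div_nonneg (qfun_pos hlam w).le hSpos.le
    · simpa [div_self hSpos.ne'] using hS.div_const S
  have hpstar_rec : SteinRecursion lam k pstar := by
    intro w hw
    obtain ⟨v, rfl⟩ : ∃ v, w = v + 1 := ⟨w - 1, (Nat.succ_pred_eq_of_pos hw).symm⟩
    simp only [hpstar, Nat.add_sub_cancel]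
    rw [div_mul_eq_mul_div, div_mul_eq_mul_div]
    push_cast
    rw [qfun_rec]
  -- uniqueness: any stationary pmf equals pstar
  have huniq : ∀ p : ℕ → ℝ, IsPmf p → SteinRecursion lam k p → p = pstar := by
    intro p hp hrec
    have hscal := rec_scalar hlam p hrec
    have hpval : p = fun w => p 0 * qfun lam k w := funext hscal
    have hsum : HasSum (fun w => p 0 * qfun lam k w) (p 0 * S) := hS.mul_left _
    have h1 : p 0 * S = 1 := by
      have := hp.2
      rw [hpval] at this
      exact hsum.unique this
    have hp0 : p 0 = 1 / S := by
      field_simp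
      linarith
    funext w
    rw [hscal w, hp0, hpstar]
    rw [one_div_mul_eq_div]
  refine ⟨⟨pstar, ⟨hpstar_pmf, rec_to_stat hlam hk pstar hpstar_pmf hpstar_rec⟩, ?_⟩, ?_, ?_⟩
  · rintro p ⟨hp, hstat⟩
    exact huniq p hp (stat_to_rec hk p hstat)
  · intro p hp
    exact ⟨fun hstat => stat_to_rec hk p hstat, fun hrec => rec_to_stat hlam hk p hp hrec⟩
  · intro p hp hstat
    have hrec := stat_to_rec hk p hstat
    have hpeq := huniq p hp hrec
    constructor
    · rw [hpeq]
      exact div_pos (qfun_pos hlam k) hSpos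
    · exact rec_mean_summable hlam p hp hrec
end

section
/- Let λ > 0. For each integer k ≥ 1 let W_k be a ℤ≥0-valued random variable with E[W_k] < ∞ and P[W_k = k] > 0 such that E[(W_k − λ) g(W_k)] = E[(λ + 1{W_k = k}) (g(W_k+1) − g(W_k))] for every bounded g : ℤ≥0 → ℝ. Then sup_{A ⊆ ℤ≥0} sup_{k ≥ 1} |g_A(k+1) − g_A(k)| = sup_{k ≥ 1} d_TV(L(W_k), Po(λ)) / P[W_k = k], where g_A is the canonical solution of the Stein equation, g_A(0) = 0 and g_A(j+1) = (j! / λ^{j+1}) Σ_{i=0}^{j} (1_A(i) − Po(λ)(A)) λ^i / i!. -/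
open MeasureTheory

section Aux
variable {lam : ℝ}

lemma phi_summable : Summable (fun i : ℕ => lam ^ i / (Nat.factorial i : ℝ)) :=
  Real.summable_pow_div_factorial lam

lemma phi_tsum : ∑' i : ℕ, lam ^ i / (Nat.factorial i : ℝ) = Real.exp lam := by
  rw [Real.exp_eq_exp_ℝ, NormedSpace.exp_eq_tsum_div]

lemma q_summable (hlam : 0 < lam) (A : Set ℕ) : Summable (fun i : ℕ =>
    Set.indicator A (fun j => Real.exp (-lam) * lam ^ j / (Nat.factorial j : ℝ)) i) := by
  apply Summable.of_nonneg_of_le (fun i => Set.indicator_nonneg (fun j _ => by positivity) i)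
    (fun i => Set.indicator_le_self' (fun j _ => by positivity) i)
  simpa [mul_div_assoc] using (phi_summable (lam := lam)).mul_left (Real.exp (-lam))

lemma poissonProb_nonneg (hlam : 0 < lam) (A : Set ℕ) : 0 ≤ poissonProb lam A :=
  tsum_nonneg (fun i => Set.indicator_nonneg (fun j _ => by positivity) i)

lemma exp_neg_tsum (lam : ℝ) :
    (∑' i : ℕ, Real.exp (-lam) * lam ^ i / (Nat.factorial i : ℝ)) = 1 := by
  have h : (∑' i : ℕ, Real.exp (-lam) * (lam ^ i / (Nat.factorial i : ℝ)))
      = Real.exp (-lam) * ∑' i : ℕ, lam ^ i / (Nat.factorial i : ℝ) := tsum_mul_left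
  simp only [mul_div_assoc]
  rw [h, phi_tsum, ← Real.exp_add, neg_add_cancel, Real.exp_zero]

lemma poissonProb_le_one (hlam : 0 < lam) (A : Set ℕ) : poissonProb lam A ≤ 1 := by
  have h1 : poissonProb lam A ≤ ∑' i : ℕ, Real.exp (-lam) * lam ^ i / (Nat.factorial i : ℝ) := by
    refine Summable.tsum_le_tsum (fun i => Set.indicator_le_self' (fun j _ => by positivity) i)
      (q_summable hlam A) ?_
    simpa [mul_div_assoc] using (phi_summable (lam := lam)).mul_left (Real.exp (-lam))
  rw [← exp_neg_tsum lam]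
  exact h1

/-- the summand in `steinSol` -/
noncomputable def fA (lam : ℝ) (A : Set ℕ) (i : ℕ) : ℝ :=
  (Set.indicator A (fun _ => (1 : ℝ)) i - poissonProb lam A) * lam ^ i / (Nat.factorial i : ℝ)

lemma fA_eq (hlam : 0 < lam) (A : Set ℕ) (i : ℕ) :
    fA lam A i = Real.exp lam *
        Set.indicator A (fun j => Real.exp (-lam) * lam ^ j / (Nat.factorial j : ℝ)) i
      - poissonProb lam A * (lam ^ i / (Nat.factorial i : ℝ)) := by
  by_cases h : i ∈ A
  · simp [fA, Set.indicator_of_mem, h, sub_mul, sub_div, mul_div_assoc, ← Real.exp_add,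
      ← mul_assoc]
  · simp [fA, Set.indicator_of_notMem, h, sub_mul, sub_div, mul_div_assoc]
    ring

lemma fA_summable (hlam : 0 < lam) (A : Set ℕ) : Summable (fA lam A) := by
  rw [funext (fA_eq hlam A)]
  exact ((q_summable hlam A).mul_left _).sub (phi_summable.mul_left _)

lemma fA_tsum (hlam : 0 < lam) (A : Set ℕ) : ∑' i, fA lam A i = 0 := by
  rw [funext (fA_eq hlam A), Summable.tsum_sub ((q_summable hlam A).mul_left _)
    (phi_summable.mul_left _), tsum_mul_left, tsum_mul_left, phi_tsum]
  rw [show (∑' i, Set.indicator A (fun j => Real.exp (-lam) * lam ^ j / (Nat.factorial j : ℝ)) i)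
    = poissonProb lam A from rfl]
  ring

lemma fA_abs_le (hlam : 0 < lam) (A : Set ℕ) (i : ℕ) :
    |fA lam A i| ≤ lam ^ i / (Nat.factorial i : ℝ) := by
  have hp0 := poissonProb_nonneg hlam A
  have hp1 := poissonProb_le_one hlam A
  have hphi : 0 ≤ lam ^ i / (Nat.factorial i : ℝ) := by positivity
  have h1 : |Set.indicator A (fun _ => (1 : ℝ)) i - poissonProb lam A| ≤ 1 := by
    refine abs_sub_le_iff.mpr ⟨?_, ?_⟩ <;> by_cases h : i ∈ A <;> simp [h] <;> linarith
  have h2 : fA lam A i = (Set.indicator A (fun _ => (1 : ℝ)) i - poissonProb lam A)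
      * (lam ^ i / (Nat.factorial i : ℝ)) := by rw [fA, mul_div_assoc]
  rw [h2, abs_mul, abs_of_nonneg hphi]
  calc |Set.indicator A (fun _ => (1 : ℝ)) i - poissonProb lam A|
        * (lam ^ i / (Nat.factorial i : ℝ))
      ≤ 1 * (lam ^ i / (Nat.factorial i : ℝ)) := mul_le_mul_of_nonneg_right h1 hphi
    _ = lam ^ i / (Nat.factorial i : ℝ) := one_mul _

end Aux

lemma phi_mul_le (hlam : 0 < lam) (i j : ℕ) :
    lam ^ (i + j) / (Nat.factorial (i + j) : ℝ)
      ≤ (lam ^ i / (Nat.factorial i : ℝ)) * (lam ^ j / (Nat.factorial j : ℝ)) := by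
  have hd : (Nat.factorial i * Nat.factorial j : ℕ) ≤ Nat.factorial (i + j) :=
    Nat.le_of_dvd (Nat.factorial_pos _) (Nat.factorial_mul_factorial_dvd_factorial_add i j)
  have hcast : ((Nat.factorial i : ℝ) * (Nat.factorial j : ℝ)) ≤ (Nat.factorial (i + j) : ℝ) := by
    exact_mod_cast hd
  rw [div_mul_div_comm, ← pow_add]
  exact div_le_div_of_nonneg_left (by positivity) (by positivity) hcast

lemma fA_partial_sum (hlam : 0 < lam) (A : Set ℕ) (j : ℕ) :
    ∑ i ∈ Finset.range (j + 1), fA lam A i = - ∑' i : ℕ, fA lam A (i + (j + 1)) := by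
  have h := Summable.sum_add_tsum_nat_add (f := fA lam A) (j + 1) (fA_summable hlam A)
  rw [fA_tsum hlam A] at h
  linarith

lemma fA_partial_sum_abs (hlam : 0 < lam) (A : Set ℕ) (j : ℕ) :
    |∑ i ∈ Finset.range (j + 1), fA lam A i|
      ≤ lam ^ (j + 1) / (Nat.factorial (j + 1) : ℝ) * Real.exp lam := by
  rw [fA_partial_sum hlam A j, abs_neg]
  have hsum : Summable (fun i : ℕ => fA lam A (i + (j + 1))) :=
    (fA_summable hlam A).comp_injective (add_left_injective (j + 1))
  have hb : ∀ i : ℕ, |fA lam A (i + (j + 1))|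
      ≤ lam ^ (j + 1) / (Nat.factorial (j + 1) : ℝ) * (lam ^ i / (Nat.factorial i : ℝ)) := by
    intro i
    refine (fA_abs_le hlam A (i + (j + 1))).trans ?_
    rw [mul_comm]
    exact phi_mul_le hlam i (j + 1)
  have hsb : Summable (fun i : ℕ =>
      lam ^ (j + 1) / (Nat.factorial (j + 1) : ℝ) * (lam ^ i / (Nat.factorial i : ℝ))) :=
    phi_summable.mul_left _
  calc |∑' i : ℕ, fA lam A (i + (j + 1))| ≤ ∑' i : ℕ, |fA lam A (i + (j + 1))| := by
        simpa using norm_tsum_le_tsum_norm (f := fun i : ℕ => fA lam A (i + (j + 1)))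
          (by simpa using hsum.abs)
    _ ≤ ∑' i : ℕ, lam ^ (j + 1) / (Nat.factorial (j + 1) : ℝ)
          * (lam ^ i / (Nat.factorial i : ℝ)) := Summable.tsum_le_tsum hb hsum.abs hsb
    _ = lam ^ (j + 1) / (Nat.factorial (j + 1) : ℝ) * Real.exp lam := by
        rw [tsum_mul_left, phi_tsum]

lemma steinSol_bound (hlam : 0 < lam) (A : Set ℕ) (j : ℕ) :
    |steinSol lam A j| ≤ Real.exp lam := by
  cases j with
  | zero => simp [steinSol]; positivity
  | succ j =>
    have h : steinSol lam A (j + 1) = (Nat.factorial j : ℝ) / lam ^ (j + 1)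
        * ∑ i ∈ Finset.range (j + 1), fA lam A i := rfl
    rw [h, abs_mul, abs_of_nonneg (by positivity)]
    calc (Nat.factorial j : ℝ) / lam ^ (j + 1) * |∑ i ∈ Finset.range (j + 1), fA lam A i|
        ≤ (Nat.factorial j : ℝ) / lam ^ (j + 1)
            * (lam ^ (j + 1) / (Nat.factorial (j + 1) : ℝ) * Real.exp lam) :=
          mul_le_mul_of_nonneg_left (fA_partial_sum_abs hlam A j) (by positivity)
      _ = (Nat.factorial j : ℝ) / (Nat.factorial (j + 1) : ℝ) * Real.exp lam := by
          field_simp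
      _ ≤ 1 * Real.exp lam := by
          apply mul_le_mul_of_nonneg_right _ (Real.exp_pos lam).le
          rw [div_le_one (by positivity)]
          exact_mod_cast Nat.factorial_le (Nat.le_succ j)
      _ = Real.exp lam := one_mul _

lemma stein_equation (hlam : 0 < lam) (A : Set ℕ) (j : ℕ) :
    lam * steinSol lam A (j + 1) - j * steinSol lam A j
      = Set.indicator A (fun _ => (1 : ℝ)) j - poissonProb lam A := by
  have hl : lam ≠ 0 := hlam.ne'
  cases j with
  | zero =>
    show lam * ((Nat.factorial 0 : ℝ) / lam ^ 1 * ∑ i ∈ Finset.range 1, fA lam A i) - _ = _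
    simp [fA, Finset.sum_range_one, Nat.factorial]
    field_simp
  | succ j =>
    show lam * ((Nat.factorial (j+1) : ℝ) / lam ^ (j + 2)
        * ∑ i ∈ Finset.range (j + 2), fA lam A i)
      - (j+1 : ℕ) * ((Nat.factorial j : ℝ) / lam ^ (j + 1)
        * ∑ i ∈ Finset.range (j + 1), fA lam A i) = _
    rw [Finset.sum_range_succ]
    have hfact : (Nat.factorial (j + 1) : ℝ) = (j + 1 : ℝ) * (Nat.factorial j : ℝ) := by
      exact_mod_cast Nat.factorial_succ j
    have hfA : fA lam A (j + 1) = (Set.indicator A (fun _ => (1 : ℝ)) (j+1) - poissonProb lam A)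
        * lam ^ (j+1) / (Nat.factorial (j+1) : ℝ) := rfl
    rw [hfA, hfact]
    push_cast
    have hfj : (Nat.factorial j : ℝ) ≠ 0 := by positivity
    field_simp
    ring

lemma integrable_comp_of_bounded {Ω : Type*} [MeasurableSpace Ω] (P : Measure Ω)
    [IsProbabilityMeasure P] {W : Ω → ℕ} (hW : Measurable W) (h : ℕ → ℝ) (C : ℝ)
    (hC : ∀ j, |h j| ≤ C) : Integrable (fun ω => h (W ω)) P :=
  (integrable_const C).mono' (measurable_from_nat.comp hW).aestronglyMeasurable
    (ae_of_all _ fun ω => by simpa using hC (W ω))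

lemma key_identity {Ω : Type*} [MeasurableSpace Ω] (P : Measure Ω) [IsProbabilityMeasure P]
    {lam : ℝ} (hlam : 0 < lam) {W : Ω → ℕ} (hW : Measurable W) (k : ℕ)
    (hint : Integrable (fun ω => (W ω : ℝ)) P)
    (hstein : ∀ g : ℕ → ℝ, (∃ C : ℝ, ∀ j : ℕ, |g j| ≤ C) →
      ∫ ω, ((W ω : ℝ) - lam) * g (W ω) ∂P =
        ∫ ω, (lam + if W ω = k then (1 : ℝ) else 0) * (g (W ω + 1) - g (W ω)) ∂P)
    (A : Set ℕ) :
    (P {ω | W ω ∈ A}).toReal - poissonProb lam A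
      = -((P {ω | W ω = k}).toReal * (steinSol lam A (k + 1) - steinSol lam A k)) := by
  set g : ℕ → ℝ := steinSol lam A with hg
  have hbd : ∀ j, |g j| ≤ Real.exp lam := steinSol_bound hlam A
  have hWm : Measurable (fun ω => (W ω : ℝ)) := measurable_from_nat.comp hW
  have hgWm : Measurable (fun ω => g (W ω)) := Measurable.comp (measurable_from_nat : Measurable g) hW
  -- integrability facts
  have hIΔ : Integrable (fun ω => lam * (g (W ω + 1) - g (W ω))) P := by
    refine integrable_comp_of_bounded P hW (fun n => lam * (g (n + 1) - g n))
      (|lam| * (2 * Real.exp lam)) (fun j => ?_)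
    rw [abs_mul]
    refine mul_le_mul_of_nonneg_left ?_ (abs_nonneg lam)
    calc |g (j + 1) - g j| ≤ |g (j + 1)| + |g j| := abs_sub _ _
      _ ≤ Real.exp lam + Real.exp lam := add_le_add (hbd _) (hbd _)
      _ = 2 * Real.exp lam := by ring
  have hI1 : Integrable (fun ω => ((W ω : ℝ) - lam) * g (W ω)) P := by
    refine Integrable.mono' ((hint.add (integrable_const |lam|)).mul_const (Real.exp lam))
      (((hWm.sub measurable_const).mul hgWm).aestronglyMeasurable)
      (ae_of_all _ fun ω => ?_)
    have h1 : |(W ω : ℝ) - lam| ≤ (W ω : ℝ) + |lam| := by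
      refine (abs_sub _ _).trans ?_
      simp [abs_of_nonneg (Nat.cast_nonneg (W ω) : (0:ℝ) ≤ (W ω : ℝ))]
    calc ‖((W ω : ℝ) - lam) * g (W ω)‖ = |(W ω : ℝ) - lam| * |g (W ω)| := abs_mul _ _
      _ ≤ ((W ω : ℝ) + |lam|) * Real.exp lam :=
        mul_le_mul h1 (hbd _) (abs_nonneg _)
          (by positivity)
  have hI3 : Integrable (fun ω => (lam + if W ω = k then (1:ℝ) else 0)
      * (g (W ω + 1) - g (W ω))) P := by
    refine integrable_comp_of_bounded P hW
      (fun n => (lam + if n = k then (1:ℝ) else 0) * (g (n + 1) - g n))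
      ((|lam| + 1) * (2 * Real.exp lam)) (fun j => ?_)
    rw [abs_mul]
    refine mul_le_mul ?_ ?_ (abs_nonneg _) (by positivity)
    · refine (abs_add_le _ _).trans (add_le_add_right ?_ _)
      split <;> simp
    · calc |g (j + 1) - g j| ≤ |g (j + 1)| + |g j| := abs_sub _ _
        _ ≤ Real.exp lam + Real.exp lam := add_le_add (hbd _) (hbd _)
        _ = 2 * Real.exp lam := by ring
  have hIA : Integrable (fun ω => Set.indicator A (fun _ => (1:ℝ)) (W ω)) P := by
    refine integrable_comp_of_bounded P hW _ 1 (fun j => ?_)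
    by_cases h : j ∈ A <;> simp [h]
  -- step 1 : pointwise Stein equation
  have hpt : ∀ ω, Set.indicator A (fun _ => (1:ℝ)) (W ω) - poissonProb lam A
      = lam * (g (W ω + 1) - g (W ω)) - ((W ω : ℝ) - lam) * g (W ω) := by
    intro ω
    have h := stein_equation hlam A (W ω)
    rw [hg]
    nlinarith [h]
  have hInt1 : ∫ ω, (Set.indicator A (fun _ => (1:ℝ)) (W ω) - poissonProb lam A) ∂P
      = ∫ ω, (lam * (g (W ω + 1) - g (W ω)) - ((W ω : ℝ) - lam) * g (W ω)) ∂P :=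
    integral_congr_ae (ae_of_all _ hpt)
  rw [integral_sub hIA (integrable_const _), integral_const] at hInt1
  rw [integral_sub hIΔ hI1] at hInt1
  -- use the Stein identity hypothesis
  rw [hstein g ⟨Real.exp lam, hbd⟩] at hInt1
  rw [← integral_sub hIΔ hI3] at hInt1
  -- step: the remaining integrand is -(indicator of {W = k}) * (g(k+1) - g k)
  have hpt2 : ∀ ω, lam * (g (W ω + 1) - g (W ω))
      - (lam + if W ω = k then (1:ℝ) else 0) * (g (W ω + 1) - g (W ω))
      = -(Set.indicator {ω' | W ω' = k} (fun _ => g (k + 1) - g k) ω) := by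
    intro ω
    by_cases h : W ω = k
    · have : (ω ∈ {ω' | W ω' = k}) := h
      rw [Set.indicator_of_mem this]
      rw [if_pos h, h]
      ring
    · have : (ω ∉ {ω' | W ω' = k}) := h
      rw [Set.indicator_of_notMem this, if_neg h]
      ring
  rw [integral_congr_ae (ae_of_all _ hpt2), integral_neg] at hInt1
  have hmeas_k : MeasurableSet {ω | W ω = k} := hW (measurableSet_singleton k)
  rw [integral_indicator_const _ hmeas_k] at hInt1
  -- identify the LHS integral with the probability
  have hA : ∫ ω, Set.indicator A (fun _ => (1:ℝ)) (W ω) ∂P = (P {ω | W ω ∈ A}).toReal := by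
    have hpt3 : ∀ ω, Set.indicator A (fun _ => (1:ℝ)) (W ω)
        = Set.indicator {ω' | W ω' ∈ A} (fun _ => (1:ℝ)) ω := by
      intro ω
      by_cases h : W ω ∈ A <;> simp [Set.indicator_apply, h]
    have hmA : MeasurableSet {ω' | W ω' ∈ A} := hW (MeasurableSet.of_discrete (s := A))
    rw [integral_congr_ae (ae_of_all _ hpt3), integral_indicator_const _ hmA]
    simp
    rfl
  rw [hA] at hInt1
  simp only [Measure.real, measure_univ, ENNReal.toReal_one, smul_eq_mul, one_mul] at hInt1
  rw [hInt1]

lemma iSup_iSup_comm_of_bounded {ι κ : Type*} [Nonempty ι] [Nonempty κ]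
    (f : ι → κ → ℝ) (C : ℝ) (hC : ∀ i j, f i j ≤ C) :
    (⨆ i, ⨆ j, f i j) = ⨆ j, ⨆ i, f i j := by
  have hb1 : ∀ j, BddAbove (Set.range fun i => f i j) :=
    fun j => ⟨C, by rintro _ ⟨i, rfl⟩; exact hC i j⟩
  have hb2 : ∀ i, BddAbove (Set.range fun j => f i j) :=
    fun i => ⟨C, by rintro _ ⟨j, rfl⟩; exact hC i j⟩
  apply le_antisymm
  · refine ciSup_le fun i => ciSup_le fun j => ?_
    refine (le_ciSup (hb1 j) i).trans
      (le_ciSup (f := fun j' => ⨆ i', f i' j') ⟨C, ?_⟩ j)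
    rintro _ ⟨j', rfl⟩
    exact ciSup_le fun i' => hC i' j'
  · refine ciSup_le fun j => ciSup_le fun i => ?_
    refine (le_ciSup (hb2 i) j).trans
      (le_ciSup (f := fun i' => ⨆ j', f i' j') ⟨C, ?_⟩ i)
    rintro _ ⟨i', rfl⟩
    exact ciSup_le fun j' => hC i' j'

/-- Let `λ > 0` and for each integer `k ≥ 1` let `W_k` be a `ℕ`-valued random
variable with `E[W_k] < ∞` and `P[W_k = k] > 0` satisfying the perturbed Stein identity
`E[(W_k − λ) g(W_k)] = E[(λ + 1{W_k = k})(g(W_k+1) − g(W_k))]` for all bounded `g`.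
Then `sup_{A} sup_{k ≥ 1} |g_A(k+1) − g_A(k)| = sup_{k ≥ 1} d_TV(L(W_k), Po(λ)) / P[W_k = k]`. -/
theorem steinFactor_eq_sup_dTV_ratio
    {Ω : Type*} [MeasurableSpace Ω] (P : Measure Ω) [IsProbabilityMeasure P]
    (lam : ℝ) (hlam : 0 < lam)
    (W : ℕ → Ω → ℕ) (hW : ∀ k, Measurable (W k))
    (hint : ∀ k, 1 ≤ k → Integrable (fun ω => (W k ω : ℝ)) P)
    (hpos : ∀ k, 1 ≤ k → 0 < (P {ω | W k ω = k}).toReal)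
    (hstein : ∀ k, 1 ≤ k → ∀ g : ℕ → ℝ, (∃ C : ℝ, ∀ j : ℕ, |g j| ≤ C) →
      ∫ ω, ((W k ω : ℝ) - lam) * g (W k ω) ∂P =
        ∫ ω, (lam + if W k ω = k then (1 : ℝ) else 0) * (g (W k ω + 1) - g (W k ω)) ∂P) :
    (⨆ A : Set ℕ, ⨆ k : {k : ℕ // 1 ≤ k},
        |steinSol lam A (k.1 + 1) - steinSol lam A k.1|) =
      ⨆ k : {k : ℕ // 1 ≤ k},
        (⨆ A : Set ℕ, |(P {ω | W k.1 ω ∈ A}).toReal - poissonProb lam A|) /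
          (P {ω | W k.1 ω = k.1}).toReal := by
  have habs : ∀ (A : Set ℕ) (k : ℕ), 1 ≤ k →
      |steinSol lam A (k + 1) - steinSol lam A k|
        = |(P {ω | W k ω ∈ A}).toReal - poissonProb lam A| / (P {ω | W k ω = k}).toReal := by
    intro A k hk
    have hkey := key_identity P hlam (hW k) k (hint k hk) (hstein k hk) A
    have hc := hpos k hk
    rw [eq_div_iff hc.ne']
    rw [hkey, abs_neg, abs_mul, abs_of_pos hc]
    ring
  have : Nonempty {k : ℕ // 1 ≤ k} := ⟨⟨1, le_refl 1⟩⟩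
  rw [iSup_iSup_comm_of_bounded
    (fun (A : Set ℕ) (k : {k : ℕ // 1 ≤ k}) =>
      |steinSol lam A (k.1 + 1) - steinSol lam A k.1|) (2 * Real.exp lam)
    (fun A k => by
      calc |steinSol lam A (k.1 + 1) - steinSol lam A k.1|
          ≤ |steinSol lam A (k.1 + 1)| + |steinSol lam A k.1| := abs_sub _ _
        _ ≤ Real.exp lam + Real.exp lam :=
            add_le_add (steinSol_bound hlam A _) (steinSol_bound hlam A _)
        _ = 2 * Real.exp lam := by ring)]
  refine iSup_congr fun k => ?_
  rw [div_eq_mul_inv, Real.iSup_mul_of_nonneg (inv_nonneg.mpr (hpos k.1 k.2).le)]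
  refine iSup_congr fun A => ?_
  rw [← div_eq_mul_inv]
  exact habs A k.1 k.2
end

section
/- Let d ≥ 2 be an integer, λ > 0, μ ∈ ℝ^d with μ_i ≥ 0 and Σ_i μ_i = 1, and K ∈ ℤ≥0^d. Let W be a random vector in ℤ≥0^d with E[Σ_i W_i] < ∞ satisfying E[B_K g(W)] = 0 for every bounded function g : ℤ≥0^d → ℝ, and suppose P[W = K + ε^(1)] = P[W = K + ε^(2)]. Then for every bounded g : ℤ≥0^d → ℝ, E[A g(W)] = −P[W = K + ε^(1)] · Δ_{12} g(K). -/
open MeasureTheory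

/-- The `i`-th standard unit vector of `ℤ≥0^d`. -/
def unitVec (d : ℕ) (i : Fin d) : Fin d → ℕ := fun j => if j = i then 1 else 0

/-- The multivariate Poisson Stein operator
`A g(w) = Σ_i λμ_i [g(w+ε⁽ⁱ⁾) − g(w)] + Σ_i w_i [g(w−ε⁽ⁱ⁾) − g(w)]`. -/
noncomputable def mvSteinA (d : ℕ) (lam : ℝ) (mu : Fin d → ℝ)
    (g : (Fin d → ℕ) → ℝ) (w : Fin d → ℕ) : ℝ :=
  (∑ i, lam * mu i * (g (w + unitVec d i) - g w)) +
    ∑ i, (w i : ℝ) * (g (w - unitVec d i) - g w)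

/-- The perturbed multivariate Stein operator `B_K`, perturbed at `K` in the coordinates
`e1`, `e2` (the "first two" coordinates). -/
noncomputable def mvSteinB (d : ℕ) (lam : ℝ) (mu : Fin d → ℝ) (K : Fin d → ℕ)
    (e1 e2 : Fin d) (g : (Fin d → ℕ) → ℝ) (w : Fin d → ℕ) : ℝ :=
  mvSteinA d lam mu g w
    + (1 / 2) * (if w = K + unitVec d e2 then (1 : ℝ) else 0) * (g (w + unitVec d e1) - g w)
    + (1 / 2) * (if w = K + unitVec d e1 then (1 : ℝ) else 0) * (g (w + unitVec d e2) - g w)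
    + (1 / 2) * (if w = K + unitVec d e1 then (1 : ℝ) else 0) * (g (w - unitVec d e1) - g w)
    + (1 / 2) * (if w = K + unitVec d e2 then (1 : ℝ) else 0) * (g (w - unitVec d e2) - g w)

/-- Let `d ≥ 2`, `λ > 0`, `μ ∈ ℝ^d` nonnegative with `Σ μ_i = 1`, and
`K ∈ ℤ≥0^d`. If `W` is a random vector in `ℤ≥0^d` with finite mean satisfying
`E[B_K g(W)] = 0` for all bounded `g` and `P[W = K+ε⁽¹⁾] = P[W = K+ε⁽²⁾]`, then for every
bounded `g`, `E[A g(W)] = −P[W = K+ε⁽¹⁾] · Δ₁₂ g(K)`. -/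
theorem mv_perturbed_stein_identity
    {Ω : Type*} [MeasurableSpace Ω] (P : Measure Ω) [IsProbabilityMeasure P]
    (d : ℕ) (hd : 2 ≤ d) (e1 e2 : Fin d) (he1 : e1.val = 0) (he2 : e2.val = 1)
    (lam : ℝ) (hlam : 0 < lam)
    (mu : Fin d → ℝ) (hmu : ∀ i, 0 ≤ mu i) (hmusum : ∑ i, mu i = 1)
    (K : Fin d → ℕ)
    (W : Ω → Fin d → ℕ) (hW : Measurable W)
    (hint : Integrable (fun ω => ∑ i, (W ω i : ℝ)) P)
    (hstein : ∀ g : (Fin d → ℕ) → ℝ, (∃ C : ℝ, ∀ w, |g w| ≤ C) →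
      ∫ ω, mvSteinB d lam mu K e1 e2 g (W ω) ∂P = 0)
    (hsym : P {ω | W ω = K + unitVec d e1} = P {ω | W ω = K + unitVec d e2}) :
    ∀ g : (Fin d → ℕ) → ℝ, (∃ C : ℝ, ∀ w, |g w| ≤ C) →
      ∫ ω, mvSteinA d lam mu g (W ω) ∂P =
        -(P {ω | W ω = K + unitVec d e1}).toReal *
          (g (K + unitVec d e1 + unitVec d e2) - g (K + unitVec d e1)
            - g (K + unitVec d e2) + g K) := by
  
  intro g hg
  obtain ⟨C, hC⟩ := hg
  have hC0 : 0 ≤ C := le_trans (abs_nonneg _) (hC fun _ => 0)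
  have hg2 : ∀ a b : Fin d → ℕ, |g a - g b| ≤ 2 * C := fun a b =>
    (abs_sub (g a) (g b)).trans (by linarith [hC a, hC b])
  set u1 := unitVec d e1 with hu1
  set u2 := unitVec d e2 with hu2
  have hne : e1 ≠ e2 := by
    intro h; rw [Fin.ext_iff, he1, he2] at h; exact absurd h (by norm_num)
  have hKne : K + u1 ≠ K + u2 := by
    intro h
    have := congrFun h e1
    simp [hu1, hu2, unitVec, hne] at this
  have hsub1 : (K + u1) - u1 = K := by funext j; simp
  have hsub2 : (K + u2) - u2 = K := by funext j; simp
  have hcomm : K + u2 + u1 = K + u1 + u2 := by funext j; simp [Pi.add_apply]; ring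
  set a := g (K + u1 + u2) with ha
  set c1 : ℝ := (1 / 2) * (a - g (K + u1)) + (1 / 2) * (g K - g (K + u1)) with hc1
  set c2 : ℝ := (1 / 2) * (a - g (K + u2)) + (1 / 2) * (g K - g (K + u2)) with hc2
  have hpt : ∀ w, mvSteinB d lam mu K e1 e2 g w
      = mvSteinA d lam mu g w
        + ((if w = K + u1 then c1 else 0) + (if w = K + u2 then c2 else 0)) := by
    intro w
    by_cases h1 : w = K + u1
    · subst h1
      simp only [mvSteinB, ← hu1, ← hu2, if_pos rfl, if_neg hKne, hsub1, hc1,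
        eq_self_iff_true, if_true, if_false, mul_zero, zero_mul, mul_one, add_zero]
      ring
    · by_cases h2 : w = K + u2
      · subst h2
        simp only [mvSteinB, ← hu1, ← hu2, if_pos rfl, if_neg (Ne.symm hKne), hsub2, hcomm,
          hc2, ha, eq_self_iff_true, if_true, if_false, mul_zero, zero_mul, mul_one, add_zero]
        ring
      · simp [mvSteinB, ← hu1, ← hu2, h1, h2]
  -- integrability of the indicator terms and their integrals
  have hindI : ∀ (x : Fin d → ℕ) (c : ℝ),
      Integrable (fun ω => if W ω = x then c else 0) P := by
    intro x c
    have hs : MeasurableSet {ω | W ω = x} := hW (measurableSet_singleton x)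
    have he : (fun ω => if W ω = x then c else 0)
        = Set.indicator {ω | W ω = x} (fun _ => c) := by
      funext ω; by_cases h : W ω = x <;> simp [Set.indicator, h]
    rw [he]; exact (integrable_const c).indicator hs
  have hindE : ∀ (x : Fin d → ℕ) (c : ℝ),
      ∫ ω, (if W ω = x then c else 0) ∂P = (P {ω | W ω = x}).toReal * c := by
    intro x c
    have hs : MeasurableSet {ω | W ω = x} := hW (measurableSet_singleton x)
    have he : (fun ω => if W ω = x then c else 0)
        = Set.indicator {ω | W ω = x} (fun _ => c) := by
      funext ω; by_cases h : W ω = x <;> simp [Set.indicator, h]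
    rw [he, integral_indicator_const c hs, smul_eq_mul]; rfl
  -- integrability of A g (W ·)
  have hint1 : Integrable
      (fun ω => ∑ i, lam * mu i * (g (W ω + unitVec d i) - g (W ω))) P := by
    refine (integrable_const (lam * (2 * C))).mono'
      (((measurable_of_countable
        (fun w : Fin d → ℕ => ∑ i, lam * mu i * (g (w + unitVec d i) - g w))).comp
        hW).aestronglyMeasurable) (Filter.Eventually.of_forall fun ω => ?_)
    calc |∑ i, lam * mu i * (g (W ω + unitVec d i) - g (W ω))|
        ≤ ∑ i, |lam * mu i * (g (W ω + unitVec d i) - g (W ω))| :=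
          Finset.abs_sum_le_sum_abs _ _
      _ ≤ ∑ i, lam * mu i * (2 * C) := by
          refine Finset.sum_le_sum fun i _ => ?_
          rw [abs_mul, abs_of_nonneg (mul_nonneg hlam.le (hmu i))]
          exact mul_le_mul_of_nonneg_left (hg2 _ _) (mul_nonneg hlam.le (hmu i))
      _ = lam * (2 * C) := by
          rw [← Finset.sum_mul]; rw [← Finset.mul_sum, hmusum, mul_one]
  have hint2 : Integrable
      (fun ω => ∑ i, (W ω i : ℝ) * (g (W ω - unitVec d i) - g (W ω))) P := by
    refine ((hint.const_mul (2 * C)).mono'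
      (((measurable_of_countable
        (fun w : Fin d → ℕ => ∑ i, (w i : ℝ) * (g (w - unitVec d i) - g w))).comp
        hW).aestronglyMeasurable) (Filter.Eventually.of_forall fun ω => ?_))
    calc |∑ i, (W ω i : ℝ) * (g (W ω - unitVec d i) - g (W ω))|
        ≤ ∑ i, |(W ω i : ℝ) * (g (W ω - unitVec d i) - g (W ω))| :=
          Finset.abs_sum_le_sum_abs _ _
      _ ≤ ∑ i, (W ω i : ℝ) * (2 * C) := by
          refine Finset.sum_le_sum fun i _ => ?_
          rw [abs_mul, abs_of_nonneg (Nat.cast_nonneg _)]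
          exact mul_le_mul_of_nonneg_left (hg2 _ _) (Nat.cast_nonneg _)
      _ = (2 * C) * ∑ i, (W ω i : ℝ) := by rw [← Finset.sum_mul, mul_comm]
  have hintA : Integrable (fun ω => mvSteinA d lam mu g (W ω)) P := by
    exact hint1.add hint2
  -- use the Stein equation
  have hB := hstein g ⟨C, hC⟩
  have hBrw : (fun ω => mvSteinB d lam mu K e1 e2 g (W ω))
      = fun ω => mvSteinA d lam mu g (W ω)
        + ((if W ω = K + u1 then c1 else 0) + (if W ω = K + u2 then c2 else 0)) :=
    funext fun ω => hpt (W ω)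
  have hindI12 : Integrable (fun ω =>
      (if W ω = K + u1 then c1 else 0) + (if W ω = K + u2 then c2 else 0)) P :=
    (hindI (K + u1) c1).add (hindI (K + u2) c2)
  rw [hBrw, integral_add hintA hindI12,
    integral_add (hindI (K + u1) c1) (hindI (K + u2) c2), hindE, hindE, ← hsym] at hB
  set p := (P {ω | W ω = K + u1}).toReal with hp
  rw [hc1, hc2] at hB
  ring_nf at hB ⊢
  linarith [hB]
end

section
/- Let d ≥ 2 be an integer, λ > 0, μ ∈ ℝ^d with μ_i ≥ 0 and Σ_i μ_i = 1, and K ∈ ℤ≥0^d. Let W be a random vector in ℤ≥0^d with E[Σ_i W_i] < ∞ such that E[B_K g(W)] = 0 holds for every bounded function g : ℤ≥0^d → ℝ and also for each coordinate projection g(w) = w_i, i = 1, …, d, and suppose P[W = K + ε^(1)] = P[W = K + ε^(2)]. Then E[W_i] = λ μ_i for every i = 1, …, d; in particular the perturbation is expectation neutral. -/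
open MeasureTheory


lemma cast_add_unit (d : ℕ) (w : Fin d → ℕ) (i j : Fin d) :
    (((w + unitVec d j) i : ℕ) : ℝ) = (w i : ℝ) + (if i = j then 1 else 0) := by
  simp only [Pi.add_apply, unitVec, Nat.cast_add]
  split <;> simp

lemma sub_unit_ne (d : ℕ) (w : Fin d → ℕ) {i j : Fin d} (h : i ≠ j) :
    (w - unitVec d j) i = w i := by
  simp [unitVec, h]

lemma steinA_proj (d : ℕ) (lam : ℝ) (mu : Fin d → ℝ) (i : Fin d) (w : Fin d → ℕ) :
    mvSteinA d lam mu (fun w => (w i : ℝ)) w = lam * mu i - (w i : ℝ) := by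
  unfold mvSteinA
  have h1 : (∑ j, lam * mu j * ((((w + unitVec d j) i : ℕ) : ℝ) - (w i : ℝ)))
      = lam * mu i := by
    rw [Finset.sum_eq_single i]
    · rw [cast_add_unit]; simp
    · intro j _ hj
      rw [cast_add_unit]
      simp [Ne.symm hj]
    · simp
  have h2 : (∑ j, (w j : ℝ) * ((((w - unitVec d j) i : ℕ) : ℝ) - (w i : ℝ)))
      = -(w i : ℝ) := by
    rw [Finset.sum_eq_single i]
    · rcases Nat.eq_zero_or_pos (w i) with h | h
      · simp [h]
      · have : (w - unitVec d i) i = w i - 1 := by simp [unitVec]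
        rw [this, Nat.cast_sub h]
        ring
    · intro j _ hj
      rw [sub_unit_ne d w (Ne.symm hj)]
      simp
    · simp
  rw [h1, h2]; ring

lemma sub_term (d : ℕ) (K : Fin d → ℕ) (e i : Fin d) (w : Fin d → ℕ) :
    (if w = K + unitVec d e then (1:ℝ) else 0) * ((((w - unitVec d e) i : ℕ) : ℝ) - (w i : ℝ))
      = -((if w = K + unitVec d e then (1:ℝ) else 0) * (if i = e then (1:ℝ) else 0)) := by
  by_cases h : w = K + unitVec d e
  · subst h
    by_cases hi : i = e
    · subst hi
      have h1 : ((K + unitVec d i) - unitVec d i) i = K i := by simp [unitVec]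
      have h2 : (K + unitVec d i) i = K i + 1 := by simp [unitVec]
      rw [h1, h2]
      push_cast
      simp
    · rw [sub_unit_ne d _ hi]
      simp [hi]
  · simp [h]

lemma steinB_proj (d : ℕ) (lam : ℝ) (mu : Fin d → ℝ) (K : Fin d → ℕ)
    (e1 e2 i : Fin d) (w : Fin d → ℕ) :
    mvSteinB d lam mu K e1 e2 (fun w => (w i : ℝ)) w
      = lam * mu i - (w i : ℝ)
        + (if i = e1 then (1:ℝ) else 0) * (1/2) *
            ((if w = K + unitVec d e2 then (1:ℝ) else 0)
              - (if w = K + unitVec d e1 then (1:ℝ) else 0))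
        + (if i = e2 then (1:ℝ) else 0) * (1/2) *
            ((if w = K + unitVec d e1 then (1:ℝ) else 0)
              - (if w = K + unitVec d e2 then (1:ℝ) else 0)) := by
  unfold mvSteinB
  rw [steinA_proj]
  simp only [cast_add_unit]
  rw [show (1:ℝ)/2 * (if w = K + unitVec d e1 then (1:ℝ) else 0) *
        ((((w - unitVec d e1) i : ℕ) : ℝ) - (w i : ℝ))
      = (1:ℝ)/2 * ((if w = K + unitVec d e1 then (1:ℝ) else 0) *
        ((((w - unitVec d e1) i : ℕ) : ℝ) - (w i : ℝ))) by ring,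
    show (1:ℝ)/2 * (if w = K + unitVec d e2 then (1:ℝ) else 0) *
        ((((w - unitVec d e2) i : ℕ) : ℝ) - (w i : ℝ))
      = (1:ℝ)/2 * ((if w = K + unitVec d e2 then (1:ℝ) else 0) *
        ((((w - unitVec d e2) i : ℕ) : ℝ) - (w i : ℝ))) by ring,
    sub_term, sub_term]
  ring

lemma indicator_int {Ω : Type*} [MeasurableSpace Ω] (P : Measure Ω) [IsProbabilityMeasure P]
    {d : ℕ} (W : Ω → Fin d → ℕ) (hW : Measurable W) (v : Fin d → ℕ) :
    Integrable (fun ω => if W ω = v then (1:ℝ) else 0) P ∧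
    ∫ ω, (if W ω = v then (1:ℝ) else 0) ∂P = (P {ω | W ω = v}).toReal := by
  have hs : MeasurableSet (W ⁻¹' {v}) := hW (measurableSet_singleton v)
  have heq : (fun ω => if W ω = v then (1:ℝ) else 0)
      = Set.indicator (W ⁻¹' {v}) (fun _ => (1:ℝ)) := by
    funext ω
    by_cases h : W ω = v <;> simp [Set.indicator_apply, Set.mem_preimage, h]
  constructor
  · rw [heq]
    exact (integrable_const (1:ℝ)).indicator hs
  · rw [heq, integral_indicator_const (1:ℝ) hs]
    simp [Set.preimage, Set.mem_singleton_iff]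
    rfl

/-- Let `d ≥ 2`, `λ > 0`, `μ` nonnegative with `Σ μ_i = 1`, `K ∈ ℤ≥0^d`.
If `W` has finite mean and `E[B_K g(W)] = 0` holds for every bounded `g` and also for each
coordinate projection `g(w) = w_i`, and `P[W = K+ε⁽¹⁾] = P[W = K+ε⁽²⁾]`, then
`E[W_i] = λ μ_i` for every `i`: the perturbation is expectation neutral. -/
theorem mv_perturbed_expectation_neutral
    {Ω : Type*} [MeasurableSpace Ω] (P : Measure Ω) [IsProbabilityMeasure P]
    (d : ℕ) (hd : 2 ≤ d) (e1 e2 : Fin d) (he1 : e1.val = 0) (he2 : e2.val = 1)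
    (lam : ℝ) (hlam : 0 < lam)
    (mu : Fin d → ℝ) (hmu : ∀ i, 0 ≤ mu i) (hmusum : ∑ i, mu i = 1)
    (K : Fin d → ℕ)
    (W : Ω → Fin d → ℕ) (hW : Measurable W)
    (hint : Integrable (fun ω => ∑ i, (W ω i : ℝ)) P)
    (hstein : ∀ g : (Fin d → ℕ) → ℝ, (∃ C : ℝ, ∀ w, |g w| ≤ C) →
      ∫ ω, mvSteinB d lam mu K e1 e2 g (W ω) ∂P = 0)
    (hproj : ∀ i : Fin d,
      ∫ ω, mvSteinB d lam mu K e1 e2 (fun w => (w i : ℝ)) (W ω) ∂P = 0)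
    (hsym : P {ω | W ω = K + unitVec d e1} = P {ω | W ω = K + unitVec d e2}) :
    ∀ i : Fin d, ∫ ω, (W ω i : ℝ) ∂P = lam * mu i := by
  intro i
  have key := hproj i
  simp_rw [steinB_proj] at key
  have hmeasWi : Measurable fun ω => ((W ω i : ℕ) : ℝ) :=
    measurable_from_top.comp ((measurable_pi_apply i).comp hW)
  have hint_i : Integrable (fun ω => (W ω i : ℝ)) P := by
    refine hint.mono hmeasWi.aestronglyMeasurable (ae_of_all _ fun ω => ?_)
    rw [Real.norm_eq_abs, Real.norm_eq_abs,
      abs_of_nonneg (by positivity), abs_of_nonneg (by positivity)]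
    exact Finset.single_le_sum (f := fun j => ((W ω j : ℕ) : ℝ))
      (fun j _ => by positivity) (Finset.mem_univ i)
  have hI1 := indicator_int P W hW (K + unitVec d e1)
  have hI2 := indicator_int P W hW (K + unitVec d e2)
  have hzero21 : ∫ ω, ((if W ω = K + unitVec d e2 then (1:ℝ) else 0)
      - (if W ω = K + unitVec d e1 then (1:ℝ) else 0)) ∂P = 0 := by
    rw [integral_sub hI2.1 hI1.1, hI1.2, hI2.2, hsym, sub_self]
  have hzero12 : ∫ ω, ((if W ω = K + unitVec d e1 then (1:ℝ) else 0)
      - (if W ω = K + unitVec d e2 then (1:ℝ) else 0)) ∂P = 0 := by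
    rw [integral_sub hI1.1 hI2.1, hI1.2, hI2.2, hsym, sub_self]
  have ha : Integrable (fun ω => lam * mu i - (W ω i : ℝ)) P :=
    (integrable_const _).sub hint_i
  have hb : Integrable (fun ω => (if i = e1 then (1:ℝ) else 0) * (1/2) *
      ((if W ω = K + unitVec d e2 then (1:ℝ) else 0)
        - (if W ω = K + unitVec d e1 then (1:ℝ) else 0))) P :=
    (hI2.1.sub hI1.1).const_mul _
  have hc : Integrable (fun ω => (if i = e2 then (1:ℝ) else 0) * (1/2) *
      ((if W ω = K + unitVec d e1 then (1:ℝ) else 0)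
        - (if W ω = K + unitVec d e2 then (1:ℝ) else 0))) P :=
    (hI1.1.sub hI2.1).const_mul _
  have h1 : ∫ ω, (lam * mu i - (W ω i : ℝ)
        + (if i = e1 then (1:ℝ) else 0) * (1/2) *
            ((if W ω = K + unitVec d e2 then (1:ℝ) else 0)
              - (if W ω = K + unitVec d e1 then (1:ℝ) else 0))
        + (if i = e2 then (1:ℝ) else 0) * (1/2) *
            ((if W ω = K + unitVec d e1 then (1:ℝ) else 0)
              - (if W ω = K + unitVec d e2 then (1:ℝ) else 0))) ∂P
      = (∫ ω, (lam * mu i - (W ω i : ℝ)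
        + (if i = e1 then (1:ℝ) else 0) * (1/2) *
            ((if W ω = K + unitVec d e2 then (1:ℝ) else 0)
              - (if W ω = K + unitVec d e1 then (1:ℝ) else 0))) ∂P)
      + ∫ ω, ((if i = e2 then (1:ℝ) else 0) * (1/2) *
            ((if W ω = K + unitVec d e1 then (1:ℝ) else 0)
              - (if W ω = K + unitVec d e2 then (1:ℝ) else 0))) ∂P :=
    integral_add (ha.add hb) hc
  have h2 : ∫ ω, (lam * mu i - (W ω i : ℝ)
        + (if i = e1 then (1:ℝ) else 0) * (1/2) *
            ((if W ω = K + unitVec d e2 then (1:ℝ) else 0)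
              - (if W ω = K + unitVec d e1 then (1:ℝ) else 0))) ∂P
      = (∫ ω, (lam * mu i - (W ω i : ℝ)) ∂P)
      + ∫ ω, ((if i = e1 then (1:ℝ) else 0) * (1/2) *
            ((if W ω = K + unitVec d e2 then (1:ℝ) else 0)
              - (if W ω = K + unitVec d e1 then (1:ℝ) else 0))) ∂P :=
    integral_add ha hb
  have h3 : ∫ ω, (lam * mu i - (W ω i : ℝ)) ∂P
      = lam * mu i - ∫ ω, (W ω i : ℝ) ∂P := by
    rw [integral_sub (integrable_const _) hint_i, integral_const]
    simp
  have h4 : ∫ ω, ((if i = e1 then (1:ℝ) else 0) * (1/2) *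
        ((if W ω = K + unitVec d e2 then (1:ℝ) else 0)
          - (if W ω = K + unitVec d e1 then (1:ℝ) else 0))) ∂P = 0 := by
    rw [integral_const_mul, hzero21, mul_zero]
  have h5 : ∫ ω, ((if i = e2 then (1:ℝ) else 0) * (1/2) *
        ((if W ω = K + unitVec d e1 then (1:ℝ) else 0)
          - (if W ω = K + unitVec d e2 then (1:ℝ) else 0))) ∂P = 0 := by
    rw [integral_const_mul, hzero12, mul_zero]
  rw [h1, h2, h3, h4, h5] at key
  linarith
end

section
/- Let d ≥ 2 be an integer, λ > 0, μ ∈ ℝ^d with μ_i ≥ 0, Σ_i μ_i = 1 and μ_1 = μ_2, and K ∈ ℤ≥0^d with K_1 = K_2. Let σ : ℤ≥0^d → ℤ≥0^d denote the map that swaps the first two coordinates. If W is a random vector in ℤ≥0^d with E[Σ_i W_i] < ∞ satisfying E[B_K g(W)] = 0 for every bounded function g : ℤ≥0^d → ℝ, then the swapped vector σ(W) = (W_2, W_1, W_3, …, W_d) also satisfies E[B_K g(σ(W))] = 0 for every bounded g. In particular, if the distribution satisfying this identity is unique, it is symmetric in the first two coordinates. -/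
open MeasureTheory


section aux
variable {d : ℕ} (e1 e2 : Fin d)

lemma unit_comp_swap (i : Fin d) :
    unitVec d i ∘ (Equiv.swap e1 e2) = unitVec d (Equiv.swap e1 e2 i) := by
  funext j
  simp only [unitVec, Function.comp]
  congr 1
  refine propext ?_
  rw [(Equiv.swap e1 e2).apply_eq_iff_eq_symm_apply, Equiv.symm_swap]

lemma add_comp_swap (w : Fin d → ℕ) (i : Fin d) :
    (w + unitVec d i) ∘ (Equiv.swap e1 e2) = w ∘ (Equiv.swap e1 e2) + unitVec d (Equiv.swap e1 e2 i) := by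
  rw [← unit_comp_swap]; rfl

lemma sub_comp_swap (w : Fin d → ℕ) (i : Fin d) :
    (w - unitVec d i) ∘ (Equiv.swap e1 e2) = w ∘ (Equiv.swap e1 e2) - unitVec d (Equiv.swap e1 e2 i) := by
  rw [← unit_comp_swap]; rfl

lemma comp_swap_eq_iff (w v : Fin d → ℕ) :
    w ∘ (Equiv.swap e1 e2) = v ↔ w = v ∘ (Equiv.swap e1 e2) := by
  constructor <;> intro h
  · funext j
    have := congrFun h (Equiv.swap e1 e2 j)
    simpa [Function.comp, Equiv.swap_apply_self] using this
  · subst h; funext j; simp [Function.comp, Equiv.swap_apply_self]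

lemma steinA_swap (lam : ℝ) (mu : Fin d → ℝ) (hmu12 : mu e1 = mu e2)
    (g : (Fin d → ℕ) → ℝ) (w : Fin d → ℕ) :
    mvSteinA d lam mu g (w ∘ Equiv.swap e1 e2)
      = mvSteinA d lam mu (fun v => g (v ∘ Equiv.swap e1 e2)) w := by
  have hmus : ∀ i, mu (Equiv.swap e1 e2 i) = mu i := by
    intro i
    rcases eq_or_ne i e1 with h1 | h1
    · simp [h1, Equiv.swap_apply_left, hmu12]
    rcases eq_or_ne i e2 with h2 | h2
    · simp [h2, Equiv.swap_apply_right, hmu12]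
    · rw [Equiv.swap_apply_of_ne_of_ne h1 h2]
  unfold mvSteinA
  congr 1
  · rw [← Equiv.sum_comp (Equiv.swap e1 e2)
      (fun i => lam * mu i * (g (w ∘ Equiv.swap e1 e2 + unitVec d i) - g (w ∘ Equiv.swap e1 e2)))]
    refine Finset.sum_congr rfl fun i _ => ?_
    beta_reduce
    rw [hmus i, add_comp_swap]
  · rw [← Equiv.sum_comp (Equiv.swap e1 e2)
      (fun i => ((w ∘ Equiv.swap e1 e2) i : ℝ) * (g (w ∘ Equiv.swap e1 e2 - unitVec d i) - g (w ∘ Equiv.swap e1 e2)))]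
    refine Finset.sum_congr rfl fun i _ => ?_
    beta_reduce
    rw [sub_comp_swap]
    congr 1
    simp [Function.comp, Equiv.swap_apply_self]

lemma steinB_swap (lam : ℝ) (mu : Fin d → ℝ) (K : Fin d → ℕ)
    (hmu12 : mu e1 = mu e2) (hK12 : K e1 = K e2)
    (g : (Fin d → ℕ) → ℝ) (w : Fin d → ℕ) :
    mvSteinB d lam mu K e1 e2 g (w ∘ Equiv.swap e1 e2)
      = mvSteinB d lam mu K e1 e2 (fun v => g (v ∘ Equiv.swap e1 e2)) w := by
  have hKs : K ∘ (Equiv.swap e1 e2) = K := by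
    funext j
    rcases eq_or_ne j e1 with h1 | h1
    · simp [h1, Equiv.swap_apply_left, hK12]
    rcases eq_or_ne j e2 with h2 | h2
    · simp [h2, Equiv.swap_apply_right, hK12]
    · simp [Function.comp, Equiv.swap_apply_of_ne_of_ne h1 h2]
  have h2to1 : (K + unitVec d e2) ∘ (Equiv.swap e1 e2) = K + unitVec d e1 := by
    rw [add_comp_swap, hKs, Equiv.swap_apply_right]
  have h1to2 : (K + unitVec d e1) ∘ (Equiv.swap e1 e2) = K + unitVec d e2 := by
    rw [add_comp_swap, hKs, Equiv.swap_apply_left]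
  have hc2 : (w ∘ (Equiv.swap e1 e2) = K + unitVec d e2) = (w = K + unitVec d e1) := by
    rw [comp_swap_eq_iff, h2to1]
  have hc1 : (w ∘ (Equiv.swap e1 e2) = K + unitVec d e1) = (w = K + unitVec d e2) := by
    rw [comp_swap_eq_iff, h1to2]
  have ha1 : w ∘ (Equiv.swap e1 e2) + unitVec d e1 = (w + unitVec d e2) ∘ (Equiv.swap e1 e2) := by
    rw [add_comp_swap, Equiv.swap_apply_right]
  have ha2 : w ∘ (Equiv.swap e1 e2) + unitVec d e2 = (w + unitVec d e1) ∘ (Equiv.swap e1 e2) := by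
    rw [add_comp_swap, Equiv.swap_apply_left]
  have hs1 : w ∘ (Equiv.swap e1 e2) - unitVec d e1 = (w - unitVec d e2) ∘ (Equiv.swap e1 e2) := by
    rw [sub_comp_swap, Equiv.swap_apply_right]
  have hs2 : w ∘ (Equiv.swap e1 e2) - unitVec d e2 = (w - unitVec d e1) ∘ (Equiv.swap e1 e2) := by
    rw [sub_comp_swap, Equiv.swap_apply_left]
  unfold mvSteinB
  rw [steinA_swap e1 e2 lam mu hmu12]
  simp only [hc1, hc2, ha1, ha2, hs1, hs2]
  ring
end aux

/-- Let `d ≥ 2`, `λ > 0`, `μ` nonnegative with `Σ μ_i = 1` and `μ_1 = μ_2`,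
and `K ∈ ℤ≥0^d` with `K_1 = K_2`. If `W` has finite mean and satisfies `E[B_K g(W)] = 0` for
every bounded `g`, then the vector `σ(W)` obtained by swapping the first two coordinates of
`W` satisfies the same identity. In particular, if the distribution satisfying the identity
is unique, it is symmetric in the first two coordinates. -/
theorem mv_perturbed_symmetry
    {Ω : Type*} [MeasurableSpace Ω] (P : Measure Ω) [IsProbabilityMeasure P]
    (d : ℕ) (hd : 2 ≤ d) (e1 e2 : Fin d) (he1 : e1.val = 0) (he2 : e2.val = 1)
    (lam : ℝ) (hlam : 0 < lam)
    (mu : Fin d → ℝ) (hmu : ∀ i, 0 ≤ mu i) (hmusum : ∑ i, mu i = 1)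
    (hmu12 : mu e1 = mu e2)
    (K : Fin d → ℕ) (hK12 : K e1 = K e2)
    (W : Ω → Fin d → ℕ) (hW : Measurable W)
    (hint : Integrable (fun ω => ∑ i, (W ω i : ℝ)) P)
    (hstein : ∀ g : (Fin d → ℕ) → ℝ, (∃ C : ℝ, ∀ w, |g w| ≤ C) →
      ∫ ω, mvSteinB d lam mu K e1 e2 g (W ω) ∂P = 0) :
    (∀ g : (Fin d → ℕ) → ℝ, (∃ C : ℝ, ∀ w, |g w| ≤ C) →
      ∫ ω, mvSteinB d lam mu K e1 e2 g (W ω ∘ Equiv.swap e1 e2) ∂P = 0) ∧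
    ((∀ Q Q' : Measure (Fin d → ℕ), IsProbabilityMeasure Q → IsProbabilityMeasure Q' →
        Integrable (fun w => ∑ i, (w i : ℝ)) Q → Integrable (fun w => ∑ i, (w i : ℝ)) Q' →
        (∀ g : (Fin d → ℕ) → ℝ, (∃ C : ℝ, ∀ w, |g w| ≤ C) →
          ∫ w, mvSteinB d lam mu K e1 e2 g w ∂Q = 0) →
        (∀ g : (Fin d → ℕ) → ℝ, (∃ C : ℝ, ∀ w, |g w| ≤ C) →
          ∫ w, mvSteinB d lam mu K e1 e2 g w ∂Q' = 0) →
        Q = Q') →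
      Measure.map (fun ω => W ω ∘ Equiv.swap e1 e2) P = Measure.map W P) := by
  have part1 : ∀ g : (Fin d → ℕ) → ℝ, (∃ C : ℝ, ∀ w, |g w| ≤ C) →
      ∫ ω, mvSteinB d lam mu K e1 e2 g (W ω ∘ Equiv.swap e1 e2) ∂P = 0 := by
    intro g hg
    have heq : (fun ω => mvSteinB d lam mu K e1 e2 g (W ω ∘ Equiv.swap e1 e2))
        = fun ω => mvSteinB d lam mu K e1 e2 (fun v => g (v ∘ Equiv.swap e1 e2)) (W ω) :=
      funext fun ω => steinB_swap e1 e2 lam mu K hmu12 hK12 g (W ω)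
    rw [show (∫ ω, mvSteinB d lam mu K e1 e2 g (W ω ∘ Equiv.swap e1 e2) ∂P)
        = ∫ ω, mvSteinB d lam mu K e1 e2 (fun v => g (v ∘ Equiv.swap e1 e2)) (W ω) ∂P from by
      rw [heq]]
    obtain ⟨C, hC⟩ := hg
    exact hstein _ ⟨C, fun w => hC _⟩
  refine ⟨part1, ?_⟩
  intro huniq
  have hmsig : Measurable (fun w : Fin d → ℕ => w ∘ Equiv.swap e1 e2) :=
    measurable_of_countable _
  have hWs : Measurable (fun ω => W ω ∘ Equiv.swap e1 e2) := hmsig.comp hW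
  haveI : IsProbabilityMeasure (Measure.map (fun ω => W ω ∘ Equiv.swap e1 e2) P) :=
    Measure.isProbabilityMeasure_map hWs.aemeasurable
  haveI : IsProbabilityMeasure (Measure.map W P) := Measure.isProbabilityMeasure_map hW.aemeasurable
  have hmeas_sum : Measurable (fun w : Fin d → ℕ => ∑ i, (w i : ℝ)) := measurable_of_countable _
  have hint' : Integrable (fun w => ∑ i, (w i : ℝ)) (Measure.map W P) := by
    rw [integrable_map_measure hmeas_sum.aestronglyMeasurable hW.aemeasurable]
    exact hint
  have hint2 : Integrable (fun w => ∑ i, (w i : ℝ))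
      (Measure.map (fun ω => W ω ∘ Equiv.swap e1 e2) P) := by
    rw [integrable_map_measure hmeas_sum.aestronglyMeasurable hWs.aemeasurable]
    have : ((fun w : Fin d → ℕ => ∑ i, (w i : ℝ)) ∘ fun ω => W ω ∘ Equiv.swap e1 e2)
        = fun ω => ∑ i, (W ω i : ℝ) := by
      funext ω
      exact Equiv.sum_comp (Equiv.swap e1 e2) (fun i => (W ω i : ℝ))
    rw [this]; exact hint
  refine huniq _ _ ‹_› ‹_› hint2 hint' ?_ ?_
  · intro g hg
    rw [integral_map hWs.aemeasurable (measurable_of_countable _).aestronglyMeasurable]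
    exact part1 g hg
  · intro g hg
    rw [integral_map hW.aemeasurable (measurable_of_countable _).aestronglyMeasurable]
    exact hstein g hg
end
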